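/- arXiv:1506.09154 — 3 statements merged into one kernel-verified Lean document; each statement's English description precedes it below -/
import Mathlib

section
/- Fix ω ∈ ℂ with ω ∉ ℝ, let Γ = {m + nω : m, n ∈ ℤ}, and let p1, p2 ∈ ℂ with p1 − p2 ∉ Γ. Let w : ℂ∖((p1+Γ) ∪ (p2+Γ)) → ℂ be holomorphic and Γ-periodic with a simple pole at p1 with residue 1 and a simple pole at p2 with residue −1. Let F : ℂ∖((p1+Γ) ∪ (p2+Γ)) → ℂ be holomorphic and Γ-periodic such that z ↦ (z−p1)F(z) and z ↦ (z−p2)F(z) extend holomorphically across p1 and p2 respectively (F has at most simple poles at p1 and p2). Then there exist α, β ∈ ℂ with F(z) = α·w(z) + β for all z ∉ (p1+Γ) ∪ (p2+Γ). -/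
open Complex Metric Set

/-- The lattice `Γ = {m + n·ω : m, n ∈ ℤ}` associated to `ω`. -/
def lattice (ω : ℂ) : Set ℂ := {z : ℂ | ∃ m n : ℤ, z = (m : ℂ) + (n : ℂ) * ω}

/-- The complement of `(p1 + Γ) ∪ (p2 + Γ)` in `ℂ`. -/
def latDom (ω p1 p2 : ℂ) : Set ℂ := {z : ℂ | z - p1 ∉ lattice ω ∧ z - p2 ∉ lattice ω}

namespace SL11
variable {ω : ℂ}

lemma lat_intCast (ω : ℂ) (m : ℤ) : (m:ℂ) ∈ lattice ω := ⟨m, 0, by push_cast; ring⟩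
lemma lat_omega (ω : ℂ) : ω ∈ lattice ω := ⟨0, 1, by push_cast; ring⟩
lemma lat_zsmul_omega (ω : ℂ) (n : ℤ) : (n:ℂ) * ω ∈ lattice ω := ⟨0, n, by push_cast; ring⟩

lemma lat_add {a b : ℂ} (ha : a ∈ lattice ω) (hb : b ∈ lattice ω) : a + b ∈ lattice ω := by
  obtain ⟨m, n, rfl⟩ := ha; obtain ⟨m', n', rfl⟩ := hb
  exact ⟨m + m', n + n', by push_cast; ring⟩

lemma lat_neg {a : ℂ} (ha : a ∈ lattice ω) : -a ∈ lattice ω := by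
  obtain ⟨m, n, rfl⟩ := ha; exact ⟨-m, -n, by push_cast; ring⟩

lemma lat_sub {a b : ℂ} (ha : a ∈ lattice ω) (hb : b ∈ lattice ω) : a - b ∈ lattice ω := by
  rw [sub_eq_add_neg]; exact lat_add ha (lat_neg hb)

lemma lat_neg_omega : lattice (-ω) = lattice ω := by
  ext z; constructor <;> rintro ⟨m, n, rfl⟩
  · exact ⟨m, -n, by push_cast; ring⟩
  · exact ⟨m, -n, by push_cast; ring⟩

lemma coords_inj (hω : ω.im ≠ 0) {x y x' y' : ℝ}
    (h : (x:ℂ) + (y:ℂ) * ω = (x':ℂ) + (y':ℂ) * ω) : x = x' ∧ y = y' := by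
  have him := congrArg Complex.im h
  have hre := congrArg Complex.re h
  simp only [Complex.add_im, Complex.ofReal_im, Complex.mul_im, Complex.ofReal_re,
    zero_mul, add_zero, zero_add, mul_zero, Complex.add_re, Complex.ofReal_re,
    Complex.mul_re] at him hre
  have hy : y = y' := by
    have : y * ω.im = y' * ω.im := by linarith
    exact mul_right_cancel₀ hω this
  refine ⟨?_, hy⟩
  rw [hy] at hre; linarith

noncomputable def coordX (ω z : ℂ) : ℝ := z.re - ω.re / ω.im * z.im
noncomputable def coordY (ω z : ℂ) : ℝ := z.im / ω.im

lemma coord_spec (hω : ω.im ≠ 0) (z : ℂ) :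
    ((coordX ω z : ℂ) + (coordY ω z : ℂ) * ω) = z := by
  apply Complex.ext
  · simp [coordX, coordY, Complex.add_re, Complex.mul_re]
    field_simp
    ring
  · simp [coordX, coordY, Complex.add_im, Complex.mul_im]
    field_simp

lemma continuous_coord (ω : ℂ) :
    Continuous (fun z : ℂ => (coordX ω z, coordY ω z)) := by
  apply Continuous.prodMk
  · exact Complex.continuous_re.sub (continuous_const.mul Complex.continuous_im)
  · exact Complex.continuous_im.div_const _

lemma isClosed_latticeLike (hω : ω.im ≠ 0) (p : ℂ) (A : Set (ℤ × ℤ)) :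
    IsClosed {z : ℂ | ∃ mn : ℤ × ℤ, mn ∈ A ∧ z = p + (mn.1:ℂ) + (mn.2:ℂ) * ω} := by
  have hset : {z : ℂ | ∃ mn : ℤ × ℤ, mn ∈ A ∧ z = p + (mn.1:ℂ) + (mn.2:ℂ) * ω} =
      (fun z : ℂ => (coordX ω (z - p), coordY ω (z - p))) ⁻¹'
        ((fun mn : ℤ × ℤ => ((mn.1 : ℝ), (mn.2 : ℝ))) '' A) := by
    ext z
    constructor
    · rintro ⟨⟨m, n⟩, hA, rfl⟩
      refine ⟨(m, n), hA, ?_⟩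
      have hz : (coordX ω (p + (m:ℂ) + (n:ℂ)*ω - p) : ℂ) + (coordY ω (p + (m:ℂ) + (n:ℂ)*ω - p) : ℂ) * ω
          = (m:ℂ) + (n:ℂ) * ω := by
        rw [coord_spec hω]; ring
      obtain ⟨h1, h2⟩ := coords_inj hω hz
      simp [h1, h2]
    · rintro ⟨⟨m, n⟩, hA, h⟩
      refine ⟨(m, n), hA, ?_⟩
      obtain ⟨h1, h2⟩ := Prod.mk.injEq .. ▸ h
      simp only at h1 h2
      have hs := coord_spec hω (z - p)
      rw [← h1, ← h2] at hs
      push_cast at hs ⊢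
      linear_combination -hs
  rw [hset]
  have hcl : IsClosed ((fun mn : ℤ × ℤ => ((mn.1 : ℝ), (mn.2 : ℝ))) '' A) := by
    have : (fun mn : ℤ × ℤ => ((mn.1 : ℝ), (mn.2 : ℝ))) = Prod.map (fun m : ℤ => (m:ℝ)) (fun n : ℤ => (n:ℝ)) := rfl
    rw [this]
    exact ((Int.isClosedEmbedding_coe_real.isProperMap.prodMap
      Int.isClosedEmbedding_coe_real.isProperMap).isClosedMap) A (isClosed_discrete A)
  exact hcl.preimage ((continuous_coord ω).comp (continuous_sub_right p))

lemma isClosed_transLat (hω : ω.im ≠ 0) (p : ℂ) : IsClosed {z : ℂ | z - p ∈ lattice ω} := by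
  have := isClosed_latticeLike hω p (Set.univ)
  convert this using 1
  ext z
  simp only [Set.mem_setOf_eq, Set.mem_univ, true_and]
  constructor
  · rintro ⟨m, n, h⟩; exact ⟨(m, n), by simp only; linear_combination h⟩
  · rintro ⟨⟨m, n⟩, h⟩; exact ⟨m, n, by simp only at h; linear_combination h⟩

lemma isClosed_transLat_punct (hω : ω.im ≠ 0) (p : ℂ) :
    IsClosed {z : ℂ | z - p ∈ lattice ω ∧ z ≠ p} := by
  have := isClosed_latticeLike hω p {mn : ℤ × ℤ | mn ≠ (0, 0)}
  convert this using 1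
  ext z
  simp only [Set.mem_setOf_eq]
  constructor
  · rintro ⟨⟨m, n, h⟩, hz⟩
    refine ⟨(m, n), ?_, by simp only; linear_combination h⟩
    intro hmn0
    rw [Prod.mk.injEq] at hmn0
    obtain ⟨rfl, rfl⟩ := hmn0
    simp only [Int.cast_zero, zero_mul, add_zero] at h
    exact hz (by rw [sub_eq_zero] at h; exact h)
  · rintro ⟨⟨m, n⟩, hmn, h⟩
    simp only at h
    refine ⟨⟨m, n, by linear_combination h⟩, ?_⟩
    intro hzp
    rw [hzp] at h
    have h0 : ((m:ℝ):ℂ) + ((n:ℝ):ℂ) * ω = ((0:ℝ):ℂ) + ((0:ℝ):ℂ) * ω := by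
      push_cast
      linear_combination -h
    obtain ⟨h1, h2⟩ := coords_inj hω h0
    exact hmn (by simp at h1 h2; simp [Prod.ext_iff, h1, h2])

section Periodicity
variable {D : Set ℂ} {f : ℂ → ℂ}

lemma per_gen (hD : ∀ z ∈ D, ∀ γ ∈ lattice ω, z + γ ∈ D) (c : ℂ)
    (hc : ∀ k : ℤ, (k:ℂ) * c ∈ lattice ω) (h1 : ∀ z ∈ D, f (z + c) = f z) :
    ∀ (m : ℤ), ∀ z ∈ D, f (z + (m:ℂ) * c) = f z := by
  intro m
  induction m using Int.induction_on with
  | zero => intro z hz; simp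
  | succ k ih =>
    intro z hz
    have hmem : z + (k:ℂ) * c ∈ D := hD z hz _ (hc k)
    have := h1 _ hmem
    have heq : z + ((k:ℤ)+1:ℤ) * c = z + (k:ℂ) * c + c := by push_cast; ring
    rw [heq, this]
    exact ih z hz
  | pred k ih =>
    intro z hz
    have hmem : z + (-(k:ℤ)-1 : ℤ) * c ∈ D := hD z hz _ (hc _)
    have := h1 _ hmem
    have heq : z + (-(k:ℤ)-1:ℤ) * c + c = z + (-(k:ℤ):ℤ) * c := by push_cast; ring
    rw [heq] at this
    rw [← this]
    exact ih z hz

lemma per_full (hD : ∀ z ∈ D, ∀ γ ∈ lattice ω, z + γ ∈ D)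
    (h1 : ∀ z ∈ D, f (z + 1) = f z) (h2 : ∀ z ∈ D, f (z + ω) = f z) :
    ∀ z ∈ D, ∀ γ ∈ lattice ω, f (z + γ) = f z := by
  have hint : ∀ (m : ℤ), ∀ z ∈ D, f (z + (m:ℂ)) = f z := by
    intro m z hz
    have := per_gen hD 1 (fun k => by simpa using lat_intCast ω k)
      (fun z hz => by simpa using h1 z hz) m z hz
    simpa using this
  have homg : ∀ (n : ℤ), ∀ z ∈ D, f (z + (n:ℂ) * ω) = f z :=
    per_gen hD ω (fun k => lat_zsmul_omega ω k) h2
  rintro z hz γ ⟨m, n, rfl⟩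
  have hzm : z + (m:ℂ) ∈ D := hD z hz _ (lat_intCast ω m)
  calc f (z + ((m:ℂ) + (n:ℂ) * ω)) = f ((z + (m:ℂ)) + (n:ℂ) * ω) := by ring_nf
    _ = f (z + (m:ℂ)) := homg n _ hzm
    _ = f z := hint m z hz

end Periodicity

lemma ext_lemma (hω : ω.im ≠ 0) (p : ℂ) (T : Set ℂ)
    (hTc : IsClosed T) (hTst : ∀ z γ, γ ∈ lattice ω → (z ∈ T ↔ z + γ ∈ T))
    (G : ℂ → ℂ)
    (hG : ∀ z, z - p ∉ lattice ω → z ∉ T → DifferentiableAt ℂ G z)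
    (h1 : ∀ z, z - p ∉ lattice ω → z ∉ T → G (z + 1) = G z)
    (h2 : ∀ z, z - p ∉ lattice ω → z ∉ T → G (z + ω) = G z)
    (g : ℂ → ℂ) (U : Set ℂ) (hU : U ∈ nhds p) (hg : DifferentiableOn ℂ g U)
    (hgG : ∀ z ∈ U, z ≠ p → g z = (z - p) * G z) (hg0 : g p = 0) :
    ∃ Gh : ℂ → ℂ, (∀ z, z ∉ T → DifferentiableAt ℂ Gh z) ∧
      (∀ z, z - p ∉ lattice ω → z ∉ T → Gh z = G z) ∧
      (∀ z, z ∉ T → Gh (z + 1) = Gh z) ∧ (∀ z, z ∉ T → Gh (z + ω) = Gh z) := by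
  classical
  set D := {z : ℂ | z - p ∉ lattice ω ∧ z ∉ T} with hDdef
  have hDst : ∀ z ∈ D, ∀ γ ∈ lattice ω, z + γ ∈ D := by
    rintro z ⟨hz1, hz2⟩ γ hγ
    refine ⟨fun hc => hz1 ?_, fun hc => hz2 ((hTst z γ hγ).mpr hc)⟩
    have h' := lat_sub hc hγ
    have : z + γ - p - γ = z - p := by ring
    rwa [this] at h'
  have hper := per_full (ω := ω) hDst (fun z hz => h1 z hz.1 hz.2)
    (fun z hz => h2 z hz.1 hz.2)
  obtain ⟨ε, hε, hball⟩ : ∃ ε > 0,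
      ball p ε ⊆ U ∩ {z : ℂ | z - p ∈ lattice ω ∧ z ≠ p}ᶜ := by
    refine Metric.mem_nhds_iff.mp (Filter.inter_mem hU
      (((isClosed_transLat_punct hω p).isOpen_compl).mem_nhds ?_))
    simp
  have hdd : DifferentiableOn ℂ (dslope g p) (ball p ε) :=
    (Complex.differentiableOn_dslope (ball_mem_nhds p hε)).mpr
      (hg.mono fun x hx => (hball hx).1)
  have hGd : ∀ x ∈ ball p ε, x ≠ p → G x = dslope g p x := by
    intro x hx hxp
    rw [dslope_of_ne g hxp, slope_def_field, hg0, hgG x (hball hx).1 hxp]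
    field_simp [sub_ne_zero.mpr hxp]
    ring
  set v := deriv g p with hvdef
  set Gh : ℂ → ℂ := fun z => if z - p ∈ lattice ω then v else G z with hGhdef
  have hGhval : ∀ z, z - p ∉ lattice ω → Gh z = G z := by
    intro z hz; simp only [hGhdef, if_neg hz]
  refine ⟨Gh, ?_, fun z hz _ => hGhval z hz, ?_, ?_⟩
  · intro z₀ hz₀T
    by_cases hz₀ : z₀ - p ∈ lattice ω
    · set γ := z₀ - p with hγdef
      have hγ : γ ∈ lattice ω := hz₀
      have key : ∀ z ∈ ball z₀ ε ∩ Tᶜ, Gh z = dslope g p (z - γ) := by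
        rintro z ⟨hzb, hzT⟩
        have hsub : z - γ - p = z - z₀ := by rw [hγdef]; ring
        have hzball : z - γ ∈ ball p ε := by
          simp only [Metric.mem_ball, Complex.dist_eq, hsub]
          simpa [Metric.mem_ball, Complex.dist_eq] using hzb
        by_cases hzp : z = z₀
        · subst hzp
          have hzgp : z - γ = p := by rw [hγdef]; ring
          simp only [hGhdef, if_pos hz₀, hzgp, dslope_same, hvdef]
          exact if_pos hz₀
        · have hzγp : z - γ ≠ p := by
            intro hc
            apply hzp
            have : z = p + γ := by rw [← hc]; ring
            rw [this, hγdef]; ring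
          have hzpl : z - p ∉ lattice ω := by
            intro hc
            have h' := lat_sub hc hγ
            rw [show z - p - γ = z - γ - p by ring] at h'
            exact (hball hzball).2 ⟨h', hzγp⟩
          have hzmem : z - γ ∈ D := by
            refine ⟨?_, ?_⟩
            · rw [show z - γ - p = z - p - γ by ring]
              intro hc
              exact hzpl (by have h' := lat_add hc hγ; rwa [sub_add_cancel] at h')
            · intro hc
              have h' := (hTst (z - γ) γ hγ).mp hc
              rw [sub_add_cancel] at h'
              exact hzT h'
          have hGz : G z = G (z - γ) := by
            have h' := hper (z - γ) hzmem γ hγ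
            rwa [sub_add_cancel] at h'
          rw [hGhval z hzpl, hGz]
          exact hGd _ hzball hzγp
      have hmemn : ball z₀ ε ∩ Tᶜ ∈ nhds z₀ :=
        Filter.inter_mem (ball_mem_nhds _ hε) (hTc.isOpen_compl.mem_nhds hz₀T)
      have hpm : z₀ - γ = p := by rw [hγdef]; ring
      have hdiff : DifferentiableAt ℂ (fun z => dslope g p (z - γ)) z₀ := by
        have hd1 : DifferentiableAt ℂ (dslope g p) (z₀ - γ) := by
          rw [hpm]
          exact hdd.differentiableAt (ball_mem_nhds _ hε)
        exact hd1.comp z₀ (differentiableAt_id.sub (differentiableAt_const γ))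
      exact hdiff.congr_of_eventuallyEq (Filter.eventuallyEq_of_mem hmemn key)
    · have hmem : D ∈ nhds z₀ := by
        have hDopen : IsOpen D := by
          have : D = {z : ℂ | z - p ∈ lattice ω}ᶜ ∩ Tᶜ := by
            ext z; simp [hDdef]
          rw [this]
          exact ((isClosed_transLat hω p).isOpen_compl).inter hTc.isOpen_compl
        exact hDopen.mem_nhds ⟨hz₀, hz₀T⟩
      have heq : ∀ᶠ z in nhds z₀, Gh z = G z :=
        Filter.eventually_of_mem hmem fun z hz => hGhval z hz.1
      exact (hG z₀ hz₀ hz₀T).congr_of_eventuallyEq heq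
  · intro z hzT
    by_cases hz : z - p ∈ lattice ω
    · have hz1 : z + 1 - p ∈ lattice ω := by
        have := lat_add hz (lat_intCast ω 1)
        rw [show z - p + ((1:ℤ):ℂ) = z + 1 - p by push_cast; ring] at this
        exact this
      simp only [hGhdef, if_pos hz, if_pos hz1]
    · have hz1 : z + 1 - p ∉ lattice ω := by
        intro hc
        apply hz
        have := lat_sub hc (lat_intCast ω 1)
        rwa [show z + 1 - p - ((1:ℤ):ℂ) = z - p by push_cast; ring] at this
      simp only [hGhdef, if_neg hz, if_neg hz1]
      exact h1 z hz hzT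
  · intro z hzT
    by_cases hz : z - p ∈ lattice ω
    · have hz1 : z + ω - p ∈ lattice ω := by
        have := lat_add hz (lat_omega ω)
        rwa [show z - p + ω = z + ω - p by ring] at this
      simp only [hGhdef, if_pos hz, if_pos hz1]
    · have hz1 : z + ω - p ∉ lattice ω := by
        intro hc
        apply hz
        have := lat_sub hc (lat_omega ω)
        rwa [show z + ω - p - ω = z - p by ring] at this
      simp only [hGhdef, if_neg hz, if_neg hz1]
      exact h2 z hz hzT

lemma elliptic_const (hω : ω.im ≠ 0) (G : ℂ → ℂ) (hG : Differentiable ℂ G)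
    (h1 : ∀ z, G (z + 1) = G z) (h2 : ∀ z, G (z + ω) = G z) (z w : ℂ) : G z = G w := by
  have hper := per_full (ω := ω) (D := Set.univ) (f := G)
    (fun z _ γ _ => Set.mem_univ _) (fun z _ => h1 z) (fun z _ => h2 z)
  set K : Set ℂ :=
    (fun xy : ℝ × ℝ => (xy.1 : ℂ) + (xy.2 : ℂ) * ω) '' (Set.Icc (0:ℝ) 1 ×ˢ Set.Icc (0:ℝ) 1)
    with hKdef
  have hKcomp : IsCompact K := (isCompact_Icc.prod isCompact_Icc).image (by
    apply Continuous.add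
    · exact Complex.continuous_ofReal.comp continuous_fst
    · exact (Complex.continuous_ofReal.comp continuous_snd).mul continuous_const)
  have hrange : Set.range G ⊆ G '' K := by
    rintro _ ⟨u, rfl⟩
    set x := coordX ω u with hxdef
    set y := coordY ω u with hydef
    set vv : ℂ := ((x - ⌊x⌋ : ℝ) : ℂ) + ((y - ⌊y⌋ : ℝ) : ℂ) * ω with hvvdef
    have hvK : vv ∈ K := by
      refine ⟨(x - ⌊x⌋, y - ⌊y⌋), ⟨⟨?_, ?_⟩, ⟨?_, ?_⟩⟩, rfl⟩
      · rw [Int.self_sub_floor]; exact Int.fract_nonneg x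
      · rw [Int.self_sub_floor]; exact (Int.fract_lt_one x).le
      · rw [Int.self_sub_floor]; exact Int.fract_nonneg y
      · rw [Int.self_sub_floor]; exact (Int.fract_lt_one y).le
    have hu : u = vv + ((⌊x⌋:ℂ) + (⌊y⌋:ℂ) * ω) := by
      have hs := coord_spec hω u
      rw [← hxdef, ← hydef] at hs
      rw [hvvdef]
      push_cast
      linear_combination -hs
    refine ⟨vv, hvK, ?_⟩
    rw [hu]
    exact (hper vv (Set.mem_univ _) _ ⟨⌊x⌋, ⌊y⌋, rfl⟩).symm
  have hb : Bornology.IsBounded (Set.range G) :=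
    ((hKcomp.image hG.continuous).isBounded).subset hrange
  exact hG.apply_eq_apply_of_bounded hb z w

lemma residue_zero (hω : 0 < ω.im) (p : ℂ) (G : ℂ → ℂ)
    (hG : ∀ z, z - p ∉ lattice ω → DifferentiableAt ℂ G z)
    (h1 : ∀ z, z - p ∉ lattice ω → G (z + 1) = G z)
    (h2 : ∀ z, z - p ∉ lattice ω → G (z + ω) = G z)
    (g : ℂ → ℂ) (U : Set ℂ) (hU : U ∈ nhds p) (hg : DifferentiableOn ℂ g U)
    (hgG : ∀ z ∈ U, z ≠ p → g z = (z - p) * G z) : g p = 0 := by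
  classical
  have hω0 : ω.im ≠ 0 := ne_of_gt hω
  have hπpos : (0:ℝ) < Real.pi := Real.pi_pos
  set c : ℂ := 2 * (Real.pi : ℂ) * Complex.I with hcdef
  have hc0 : c ≠ 0 := by
    rw [hcdef]
    simp [Complex.I_ne_zero, Real.pi_ne_zero, Complex.ofReal_ne_zero]
  set E : ℂ → ℂ := fun z => Complex.exp (c * z) with hEdef
  have hEne : ∀ z, E z ≠ 0 := fun z => Complex.exp_ne_zero _
  set S : Set ℂ := {z : ℂ | z - p ∈ lattice ω} with hSdef
  have hSc : IsClosed S := isClosed_transLat hω0 p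
  have hSst : ∀ z γ, γ ∈ lattice ω → z ∉ S → z + γ ∉ S := by
    intro z γ hγ hz hmem
    apply hz
    have h' := lat_sub hmem hγ
    rwa [show z + γ - p - γ = z - p by ring] at h'
  have hper : ∀ z ∈ Sᶜ, ∀ γ ∈ lattice ω, G (z + γ) = G z :=
    per_full (ω := ω) (D := Sᶜ) (fun z hz γ hγ => hSst z γ hγ hz)
      (fun z hz => h1 z hz) (fun z hz => h2 z hz)
  have hEadd : ∀ z w' : ℂ, E (z + w') = E z * E w' := by
    intro z w'
    simp only [hEdef, mul_add, Complex.exp_add]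
  have hEint : ∀ (z : ℂ) (k : ℤ), E (z + (k:ℂ)) = E z := by
    intro z k
    rw [hEadd]
    have hk1 : E ((k:ℤ):ℂ) = 1 := by
      simp only [hEdef]
      rw [show c * ((k:ℤ):ℂ) = ((k:ℤ):ℂ) * (2 * (Real.pi:ℂ) * Complex.I) by rw [hcdef]; ring]
      exact Complex.exp_int_mul_two_pi_mul_I k
    rw [hk1, mul_one]
  have habs : ∀ z : ℂ, ‖E z‖ = Real.exp (-(2 * Real.pi * z.im)) := by
    intro z
    simp only [hEdef, Complex.norm_exp]
    congr 1
    rw [hcdef]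
    simp [Complex.mul_re, Complex.mul_im]
  have hElog : ∀ q : ℂ, q ≠ 0 → E (Complex.log q / c) = q := by
    intro q hq
    simp only [hEdef]
    rw [mul_div_cancel₀ _ hc0]
    exact Complex.exp_log hq
  have hbranch : ∀ (q z : ℂ), q ≠ 0 → E z = q → ∃ k : ℤ, Complex.log q / c = z + (k:ℂ) := by
    intro q z hq hEz
    have hexp : Complex.exp (Complex.log q) = Complex.exp (c * z) := by
      rw [Complex.exp_log hq, ← hEz]
    obtain ⟨k, hk⟩ := Complex.exp_eq_exp_iff_exists_int.mp hexp
    refine ⟨k, ?_⟩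
    rw [div_eq_iff hc0, hk, hcdef]
    ring
  set ψ : ℂ → ℂ := fun q => G (Complex.log q / c) with hψdef
  have hψG : ∀ z, z ∉ S → ψ (E z) = G z := by
    intro z hz
    obtain ⟨k, hk⟩ := hbranch (E z) z (hEne z) rfl
    simp only [hψdef]
    rw [hk]
    exact hper z hz _ (lat_intCast ω k)
  have hψdiff : ∀ q : ℂ, q ≠ 0 → (∀ z, E z = q → z ∉ S) → DifferentiableAt ℂ ψ q := by
    intro q hq hqS
    set ζ : ℂ → ℂ := fun u => (Complex.log (u / q) + Complex.log q) / c with hζdef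
    have hζq : ζ q = Complex.log q / c := by
      simp only [hζdef]
      rw [div_self hq, Complex.log_one, zero_add]
    have hζdiff : DifferentiableAt ℂ ζ q := by
      apply DifferentiableAt.div_const
      apply DifferentiableAt.add_const
      refine (differentiableAt_id.div_const q).clog ?_
      rw [div_self hq]
      simp [Complex.mem_slitPlane_iff]
    have hζqS : ζ q ∉ S := by rw [hζq]; exact hqS _ (hElog q hq)
    have hEζ : ∀ u : ℂ, u ≠ 0 → E (ζ u) = u := by
      intro u hu
      simp only [hEdef, hζdef]
      rw [mul_div_cancel₀ _ hc0, Complex.exp_add, Complex.exp_log hq,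
        Complex.exp_log (div_ne_zero hu hq)]
      field_simp
    have hev : ∀ᶠ u in nhds q, ψ u = G (ζ u) := by
      have h1ev : ∀ᶠ u in nhds q, u ≠ 0 := isOpen_ne.eventually_mem hq
      have h2ev : ∀ᶠ u in nhds q, ζ u ∉ S :=
        hζdiff.continuousAt.eventually_mem (hSc.isOpen_compl.mem_nhds hζqS)
      filter_upwards [h1ev, h2ev] with u hu1 hu2
      obtain ⟨k, hk⟩ := hbranch u (ζ u) hu1 (hEζ u hu1)
      simp only [hψdef]
      rw [hk]
      exact hper (ζ u) hu2 _ (lat_intCast ω k)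
    exact ((hG (ζ q) hζqS).comp q hζdiff).congr_of_eventuallyEq hev
  have hψper : ∀ q : ℂ, q ≠ 0 → (∀ z, E z = q → z ∉ S) → ψ (E ω * q) = ψ q := by
    intro q hq hqS
    set z := Complex.log q / c with hzdef
    have hzS : z ∉ S := hqS _ (hElog q hq)
    have hEz : E z = q := hElog q hq
    have hEzω : E (z + ω) = E ω * q := by rw [hEadd, hEz]; ring
    have hzωS : z + ω ∉ S := hSst z ω (lat_omega ω) hzS
    calc ψ (E ω * q) = ψ (E (z + ω)) := by rw [hEzω]
      _ = G (z + ω) := hψG _ hzωS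
      _ = G z := h2 z hzS
      _ = ψ q := rfl
  -- radii
  set a : ℝ := p.im with hadef
  set b : ℝ := ω.im with hbdef
  have hbpos : 0 < b := hω
  set Rout : ℝ := Real.exp (-(2 * Real.pi * (a - b / 2))) with hRoutdef
  set Rin : ℝ := Real.exp (-(2 * Real.pi * (a + b / 2))) with hRindef
  have hRoutpos : 0 < Rout := Real.exp_pos _
  have hRinpos : 0 < Rin := Real.exp_pos _
  set qs : ℂ := E p with hqsdef
  have hqs0 : qs ≠ 0 := hEne p
  have hqsabs : ‖qs‖ = Real.exp (-(2 * Real.pi * a)) := habs p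
  have hlt1 : Rin < ‖qs‖ := by
    rw [hqsabs, hRindef]
    apply Real.exp_lt_exp.mpr
    nlinarith
  have hlt2 : ‖qs‖ < Rout := by
    rw [hqsabs, hRoutdef]
    apply Real.exp_lt_exp.mpr
    nlinarith
  have hRinRout : Rin ≤ Rout := le_of_lt (lt_trans hlt1 hlt2)
  have hAP : ∀ q : ℂ, Rin ≤ ‖q‖ → ‖q‖ ≤ Rout → q ≠ qs →
      ∀ z, E z = q → z ∉ S := by
    intro q hq1 hq2 hqqs z hEz hzS
    obtain ⟨m, n, hmn⟩ := hzS
    have hzim : z.im = a + (n:ℝ) * b := by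
      have him := congrArg Complex.im hmn
      simp only [Complex.sub_im, Complex.add_im, Complex.mul_im, Complex.intCast_im,
        Complex.intCast_re, zero_mul, add_zero, zero_add, mul_zero] at him
      rw [hadef, hbdef]
      linarith
    have habsq : ‖q‖ = Real.exp (-(2 * Real.pi * (a + (n:ℝ) * b))) := by
      rw [← hEz, habs, hzim]
    have hn0 : n = 0 := by
      rw [habsq, hRindef] at hq1
      rw [habsq, hRoutdef] at hq2
      rw [Real.exp_le_exp] at hq1 hq2
      have hcast : |(n:ℝ)| < 1 := by
        rw [abs_lt]
        constructor <;> nlinarith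
      have : |n| < 1 := by exact_mod_cast (by rwa [← Int.cast_abs] at hcast : ((|n|:ℤ):ℝ) < 1)
      exact Int.abs_lt_one_iff.mp this
    apply hqqs
    rw [← hEz, hqsdef]
    have hz : z = p + ((m:ℤ):ℂ) := by
      rw [hn0] at hmn
      push_cast at hmn ⊢
      linear_combination hmn
    rw [hz]
    exact hEint p m
  -- local residue extension at qs
  set ℓ : ℂ → ℂ := fun u => Complex.log (u / qs) with hℓdef
  set ζs : ℂ → ℂ := fun u => p + ℓ u / c with hζsdef
  have hℓqs : ℓ qs = 0 := by simp only [hℓdef]; rw [div_self hqs0, Complex.log_one]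
  have hζsqs : ζs qs = p := by simp only [hζsdef]; rw [hℓqs]; simp
  set W : Set ℂ := {u : ℂ | u / qs ∈ Complex.slitPlane} with hWdef
  have hWopen : IsOpen W := Complex.isOpen_slitPlane.preimage (continuous_id.div_const qs)
  have hqsW : qs ∈ W := by
    simp only [hWdef, Set.mem_setOf_eq]
    rw [div_self hqs0]
    simp [Complex.mem_slitPlane_iff]
  have hWnhds : W ∈ nhds qs := hWopen.mem_nhds hqsW
  have hℓdiffOn : DifferentiableOn ℂ ℓ W := by
    intro u hu
    exact ((differentiableAt_id.div_const qs).clog hu).differentiableWithinAt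
  have hdd : DifferentiableOn ℂ (dslope ℓ qs) W :=
    (Complex.differentiableOn_dslope hWnhds).mpr hℓdiffOn
  have hddqs : dslope ℓ qs qs = qs⁻¹ := by
    rw [dslope_same]
    have hder : HasDerivAt ℓ qs⁻¹ qs := by
      have h2' : HasDerivAt (fun u : ℂ => u / qs) qs⁻¹ qs := by
        simpa [one_div] using (hasDerivAt_id qs).div_const qs
      have h1' := h2'.clog (by rw [div_self hqs0]; simp [Complex.mem_slitPlane_iff])
      simpa [div_self hqs0] using h1'
    exact hder.deriv
  set Φ : ℂ → ℂ := fun u => c * g (ζs u) / (u * dslope ℓ qs u) with hΦdef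
  have hζsdiffat : DifferentiableAt ℂ ζs qs := by
    have hl : DifferentiableAt ℂ (fun u : ℂ => u / qs) qs := differentiableAt_id.div_const qs
    have hlog := hl.clog (by exact hqsW)
    exact (differentiableAt_const p).add (hlog.div_const c)
  obtain ⟨δ, hδpos, hδball⟩ : ∃ δ > 0, ball qs δ ⊆ ((W ∩ {u : ℂ | u ≠ 0}) ∩
      {u : ℂ | dslope ℓ qs u ≠ 0}) ∩
      (ζs ⁻¹' (interior U) ∩ ζs ⁻¹' ({z : ℂ | z - p ∈ lattice ω ∧ z ≠ p})ᶜ) := by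
    apply Metric.mem_nhds_iff.mp
    refine Filter.inter_mem (Filter.inter_mem (Filter.inter_mem hWnhds ?_) ?_)
      (Filter.inter_mem ?_ ?_)
    · exact isOpen_ne.mem_nhds hqs0
    · have hcont : ContinuousAt (dslope ℓ qs) qs := (hdd.differentiableAt hWnhds).continuousAt
      show dslope ℓ qs ⁻¹' {w : ℂ | w ≠ 0} ∈ nhds qs
      apply hcont.preimage_mem_nhds
      rw [hddqs]
      exact isOpen_ne.mem_nhds (inv_ne_zero hqs0)
    · apply hζsdiffat.continuousAt.preimage_mem_nhds
      rw [hζsqs]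
      exact interior_mem_nhds.mpr hU
    · apply hζsdiffat.continuousAt.preimage_mem_nhds
      rw [hζsqs]
      apply ((isClosed_transLat_punct hω0 p).isOpen_compl).mem_nhds
      simp
  have hEζs : ∀ u : ℂ, u ≠ 0 → E (ζs u) = u := by
    intro u hu
    simp only [hEdef, hζsdef, hℓdef]
    rw [mul_add, Complex.exp_add, mul_div_cancel₀ _ hc0,
      Complex.exp_log (div_ne_zero hu hqs0)]
    have : Complex.exp (c * p) = qs := rfl
    rw [this]
    field_simp
  have hζs_ne_p : ∀ u : ℂ, u ≠ 0 → u ≠ qs → ζs u ≠ p := by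
    intro u hu0 huqs hcp
    apply huqs
    have hl0 : ℓ u = 0 := by
      have : ℓ u / c = 0 := by
        have := congrArg (fun x => x - p) hcp
        simpa [hζsdef] using this
      field_simp [hc0] at this
      simpa using this
    have : u / qs = 1 := by
      rw [← Complex.exp_log (div_ne_zero hu0 hqs0)]
      rw [show Complex.log (u / qs) = ℓ u from rfl, hl0, Complex.exp_zero]
    field_simp at this
    exact this
  have hζsS : ∀ u ∈ ball qs δ, u ≠ qs → ζs u ∉ S := by
    intro u hu huqs hmem
    obtain ⟨hu1, hu2⟩ := hδball hu
    have hune : u ≠ 0 := hu1.1.2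
    exact hu2.2 ⟨hmem, hζs_ne_p u hune huqs⟩
  have hψζ : ∀ u ∈ ball qs δ, u ≠ qs → ψ u = G (ζs u) := by
    intro u hu huqs
    have hune : u ≠ 0 := (hδball hu).1.1.2
    obtain ⟨k, hk⟩ := hbranch u (ζs u) hune (hEζs u hune)
    simp only [hψdef]
    rw [hk]
    exact hper (ζs u) (hζsS u hu huqs) _ (lat_intCast ω k)
  have hΦdiff : ∀ u ∈ ball qs δ, DifferentiableAt ℂ Φ u := by
    intro u hu
    obtain ⟨⟨⟨huW, hune⟩, hudd⟩, huU, huS⟩ := hδball hu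
    have hζsdiffu : DifferentiableAt ℂ ζs u := by
      have hl : DifferentiableAt ℂ (fun v : ℂ => v / qs) u := differentiableAt_id.div_const qs
      have hlog := hl.clog (by exact huW)
      exact (differentiableAt_const p).add (hlog.div_const c)
    have hgdiff : DifferentiableAt ℂ g (ζs u) :=
      hg.differentiableAt (mem_interior_iff_mem_nhds.mp huU)
    have hdddiff : DifferentiableAt ℂ (dslope ℓ qs) u := hdd.differentiableAt (hWopen.mem_nhds huW)
    exact ((differentiableAt_const c).mul (hgdiff.comp u hζsdiffu)).div
      (differentiableAt_id.mul hdddiff) (mul_ne_zero hune hudd)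
  have hΦqs : Φ qs = c * g p := by
    simp only [hΦdef]
    rw [hζsqs, hddqs]
    field_simp
  have hΦres : ∀ u ∈ ball qs δ, u ≠ qs → Φ u = (u - qs) * ψ u / u := by
    intro u hu huqs
    obtain ⟨⟨⟨huW, hune⟩, hudd⟩, huU, huS⟩ := hδball hu
    have hζne : ζs u ≠ p := hζs_ne_p u hune huqs
    have hℓne : ℓ u ≠ 0 := by
      intro hl0
      apply hζne
      simp only [hζsdef]
      rw [hl0]
      simp
    have hgu : g (ζs u) = (ζs u - p) * G (ζs u) :=
      hgG (ζs u) (interior_subset huU) hζne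
    have hψu : ψ u = G (ζs u) := hψζ u hu huqs
    have hddu : dslope ℓ qs u = ℓ u / (u - qs) := by
      rw [dslope_of_ne _ huqs, slope_def_field, hℓqs, sub_zero]
    have hζp : ζs u - p = ℓ u / c := by simp only [hζsdef]; ring
    rw [hΦdef]
    simp only
    rw [hψu, hgu, hddu, hζp]
    have husub : u - qs ≠ 0 := sub_ne_zero.mpr huqs
    generalize G (ζs u) = Gu
    have hune' : u ≠ 0 := hune
    field_simp [hℓne, hune', husub, hc0]
  -- the function to integrate
  set ρ : ℂ := c * g p with hρdef
  set fE : ℂ → ℂ := fun u => if u = qs then deriv Φ qs else ψ u / u - ρ * (u - qs)⁻¹ with hfEdef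
  have hfEdslope : ∀ u ∈ ball qs δ, fE u = dslope Φ qs u := by
    intro u hu
    by_cases huqs : u = qs
    · subst huqs
      simp only [hfEdef, if_pos rfl, dslope_same]
    · simp only [hfEdef, if_neg huqs]
      rw [dslope_of_ne _ huqs, slope_def_field, hΦqs, hΦres u hu huqs]
      have hune' : u ≠ 0 := (hδball hu).1.1.2
      have husub : u - qs ≠ 0 := sub_ne_zero.mpr huqs
      field_simp
  have hfEqs : DifferentiableAt ℂ fE qs := by
    have hΦdiffOn : DifferentiableOn ℂ Φ (ball qs δ) :=
      fun u hu => (hΦdiff u hu).differentiableWithinAt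
    have hdsl : DifferentiableOn ℂ (dslope Φ qs) (ball qs δ) :=
      (Complex.differentiableOn_dslope (ball_mem_nhds _ hδpos)).mpr hΦdiffOn
    exact (hdsl.differentiableAt (ball_mem_nhds _ hδpos)).congr_of_eventuallyEq
      (Filter.eventuallyEq_of_mem (ball_mem_nhds _ hδpos) hfEdslope)
  have hfEdiff : ∀ u : ℂ, u ≠ qs → Rin ≤ ‖u‖ → ‖u‖ ≤ Rout →
      DifferentiableAt ℂ fE u := by
    intro u huqs h1' h2'
    have hu0 : u ≠ 0 := by
      intro h0
      rw [h0] at h1'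
      simp only [norm_zero] at h1'
      linarith
    have hψd : DifferentiableAt ℂ ψ u := hψdiff u hu0 (hAP u h1' h2' huqs)
    have hrest : DifferentiableAt ℂ (fun u => ψ u / u - ρ * (u - qs)⁻¹) u := by
      apply DifferentiableAt.sub
      · exact hψd.div differentiableAt_id hu0
      · exact (differentiableAt_const ρ).mul
          ((differentiableAt_id.sub_const qs).inv (sub_ne_zero.mpr huqs))
    apply hrest.congr_of_eventuallyEq
    have hev : ∀ᶠ v in nhds u, v ≠ qs := isOpen_ne.eventually_mem huqs
    filter_upwards [hev] with v hv
    simp only [hfEdef, if_neg hv]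
  have hannulus : (∮ z in C(0, Rout), fE z) = ∮ z in C(0, Rin), fE z := by
    apply Complex.circleIntegral_eq_of_differentiable_on_annulus_off_countable hRinpos hRinRout
      Set.countable_empty
    · intro u hu
      obtain ⟨hu1, hu2⟩ := hu
      have h1' : Rin ≤ ‖u‖ := by
        simp only [Metric.mem_ball, Complex.dist_eq, sub_zero, not_lt] at hu2
        exact hu2
      have h2' : ‖u‖ ≤ Rout := by
        simpa [Metric.mem_closedBall, Complex.dist_eq, sub_zero] using hu1
      by_cases huqs : u = qs
      · rw [huqs]
        exact hfEqs.continuousAt.continuousWithinAt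
      · exact (hfEdiff u huqs h1' h2').continuousAt.continuousWithinAt
    · intro u hu
      obtain ⟨⟨hu1, hu2⟩, -⟩ := hu
      have h1' : Rin ≤ ‖u‖ := by
        simp only [Metric.mem_closedBall, Complex.dist_eq, sub_zero, not_le] at hu2
        exact hu2.le
      have h2' : ‖u‖ ≤ Rout := by
        simp only [Metric.mem_ball, Complex.dist_eq, sub_zero] at hu1
        exact hu1.le
      by_cases huqs : u = qs
      · rw [huqs]; exact hfEqs
      · exact hfEdiff u huqs h1' h2'
  have hsphere : ∀ R : ℝ, Rin ≤ R → R ≤ Rout → ‖qs‖ ≠ R →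
      ContinuousOn (fun z => ψ z / z) (sphere (0:ℂ) R) := by
    intro R hR1 hR2 hRqs u hu
    have habsu : ‖u‖ = R := by
      simpa [Complex.dist_eq, sub_zero] using hu
    have hu0 : u ≠ 0 := by
      intro h0
      rw [h0] at habsu
      simp only [norm_zero] at habsu
      have : (0:ℝ) < R := lt_of_lt_of_le hRinpos hR1
      linarith
    have huqs : u ≠ qs := by
      intro h
      rw [h] at habsu
      exact hRqs habsu
    exact ((hψdiff u hu0 (hAP u (by rw [habsu]; exact hR1) (by rw [habsu]; exact hR2)
      huqs)).div differentiableAt_id hu0).continuousAt.continuousWithinAt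
  have hint_inv : ∀ R : ℝ, 0 < R → ‖qs‖ ≠ R →
      CircleIntegrable (fun z => ρ * (z - qs)⁻¹) 0 R := by
    intro R hR hRqs
    apply ContinuousOn.circleIntegrable hR.le
    intro u hu
    have habsu : ‖u‖ = R := by simpa [Complex.dist_eq, sub_zero] using hu
    have huqs : u - qs ≠ 0 := by
      rw [sub_ne_zero]
      intro h
      rw [h] at habsu
      exact hRqs habsu
    exact (continuousAt_const.mul
      ((continuousAt_id.sub continuousAt_const).inv₀ huqs)).continuousWithinAt
  have hsplit : ∀ R : ℝ, Rin ≤ R → R ≤ Rout → ‖qs‖ ≠ R →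
      (∮ z in C(0, R), fE z) =
        (∮ z in C(0, R), ψ z / z) - ρ * ∮ z in C(0, R), (z - qs)⁻¹ := by
    intro R hR1 hR2 hRqs
    have hRpos : 0 < R := lt_of_lt_of_le hRinpos hR1
    have hcongr : (∮ z in C(0, R), fE z) =
        ∮ z in C(0, R), (ψ z / z - ρ * (z - qs)⁻¹) := by
      apply circleIntegral.integral_congr hRpos.le
      intro u hu
      have habsu : ‖u‖ = R := by simpa [Complex.dist_eq, sub_zero] using hu
      have huqs : u ≠ qs := by
        intro h
        rw [h] at habsu
        exact hRqs habsu
      simp only [hfEdef, if_neg huqs]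
    rw [hcongr, circleIntegral.integral_sub
      (ContinuousOn.circleIntegrable hRpos.le (hsphere R hR1 hR2 hRqs))
      (hint_inv R hRpos hRqs)]
    congr 1
    have hsmul := circleIntegral.integral_smul (𝕜 := ℂ) ρ (fun z => (z - qs)⁻¹) 0 R
    simpa [smul_eq_mul] using hsmul
  have hout_inv : (∮ z in C(0, Rout), (z - qs)⁻¹) = 2 * Real.pi * Complex.I := by
    apply circleIntegral.integral_sub_inv_of_mem_ball
    simp only [Metric.mem_ball, Complex.dist_eq, sub_zero]
    exact hlt2
  have hin_inv : (∮ z in C(0, Rin), (z - qs)⁻¹) = 0 := by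
    apply Complex.circleIntegral_eq_zero_of_differentiable_on_off_countable hRinpos.le
      Set.countable_empty
    · intro u hu
      have habsu : ‖u‖ ≤ Rin := by
        simpa [Complex.dist_eq, sub_zero] using hu
      have huqs : u - qs ≠ 0 := by
        rw [sub_ne_zero]
        intro h
        rw [h] at habsu
        linarith
      exact ((continuousAt_id.sub continuousAt_const).inv₀ huqs).continuousWithinAt
    · intro u hu
      obtain ⟨hu1, -⟩ := hu
      have habsu : ‖u‖ < Rin := by
        simpa [Complex.dist_eq, sub_zero] using hu1
      have huqs : u - qs ≠ 0 := by
        rw [sub_ne_zero]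
        intro h
        rw [h] at habsu
        linarith
      exact (differentiableAt_id.sub_const qs).inv huqs
  -- periodicity relates the two circle integrals of ψ z / z
  set t : ℂ := E ω with htdef
  have htabs : ‖t‖ = Real.exp (-(2 * Real.pi * b)) := habs ω
  have hscale : Rin = ‖t‖ * Rout := by
    rw [htabs, hRindef, hRoutdef, ← Real.exp_add]
    congr 1
    ring
  set φt : ℝ := Complex.arg t with hφdef
  have htpolar : ((‖t‖ : ℝ) : ℂ) * Complex.exp ((φt:ℂ) * Complex.I) = t :=
    Complex.norm_mul_exp_arg_mul_I t
  have hcircrel : ∀ θ : ℝ, circleMap 0 Rin θ = t * circleMap 0 Rout (θ - φt) := by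
    intro θ
    rw [circleMap_zero, circleMap_zero, ← htpolar]
    have hexp : Complex.exp ((φt:ℂ) * Complex.I) *
        Complex.exp (((θ:ℂ) - (φt:ℂ)) * Complex.I) = Complex.exp ((θ:ℂ) * Complex.I) := by
      rw [← Complex.exp_add]
      congr 1
      ring
    rw [hscale]
    push_cast
    linear_combination (-((‖t‖ : ℝ) : ℂ) * (Rout:ℂ)) * hexp
  have hψcirc_eq : (∮ z in C(0, Rout), ψ z / z) = ∮ z in C(0, Rin), ψ z / z := by
    have hunfold : ∀ R : ℝ, 0 < R → (∮ z in C(0, R), ψ z / z) =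
        ∫ θ in (0:ℝ)..(2 * Real.pi), Complex.I * ψ (circleMap 0 R θ) := by
      intro R hR
      simp only [circleIntegral, deriv_circleMap]
      apply intervalIntegral.integral_congr
      intro θ hθ
      have h0 : circleMap 0 R θ ≠ 0 := by
        have h' := circleMap_ne_center (c := (0:ℂ)) (R := R) hR.ne' (θ := θ)
        simpa using h'
      simp only [smul_eq_mul]
      field_simp
    have hOut_pt : ∀ θ' : ℝ, ψ (t * circleMap 0 Rout θ') = ψ (circleMap 0 Rout θ') := by
      intro θ'
      have habsq : ‖circleMap 0 Rout θ'‖ = Rout := by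
        rw [norm_circleMap_zero]
        exact abs_of_pos hRoutpos
      have hq0 : circleMap 0 Rout θ' ≠ 0 := by
        intro h0
        rw [h0] at habsq
        simp only [norm_zero] at habsq
        linarith
      have hqqs : circleMap 0 Rout θ' ≠ qs := by
        intro h
        rw [h] at habsq
        exact (ne_of_lt hlt2) habsq
      exact hψper _ hq0 (hAP _ (by rw [habsq]; exact hRinRout) (by rw [habsq]) hqqs)
    rw [hunfold _ hRoutpos, hunfold _ hRinpos]
    have step1 : (∫ θ in (0:ℝ)..(2 * Real.pi), Complex.I * ψ (circleMap 0 Rin θ)) =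
        ∫ θ in (0:ℝ)..(2 * Real.pi), Complex.I * ψ (circleMap 0 Rout (θ - φt)) := by
      apply intervalIntegral.integral_congr
      intro θ hθ
      show Complex.I * ψ (circleMap 0 Rin θ) = Complex.I * ψ (circleMap 0 Rout (θ - φt))
      rw [hcircrel θ, hOut_pt (θ - φt)]
    have step2 : (∫ θ in (0:ℝ)..(2 * Real.pi), Complex.I * ψ (circleMap 0 Rout (θ - φt))) =
        ∫ θ in (0 - φt)..(2 * Real.pi - φt), Complex.I * ψ (circleMap 0 Rout θ) :=
      intervalIntegral.integral_comp_sub_right (fun θ => Complex.I * ψ (circleMap 0 Rout θ)) φt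
    have hper2 : Function.Periodic (fun θ : ℝ => Complex.I * ψ (circleMap 0 Rout θ))
        (2 * Real.pi) := by
      intro θ
      simp only
      rw [periodic_circleMap 0 Rout θ]
    have step3 : (∫ θ in (0 - φt)..(2 * Real.pi - φt), Complex.I * ψ (circleMap 0 Rout θ)) =
        ∫ θ in (0:ℝ)..(2 * Real.pi), Complex.I * ψ (circleMap 0 Rout θ) := by
      have h' := hper2.intervalIntegral_add_eq (0 - φt) 0
      rw [show (0:ℝ) - φt + 2 * Real.pi = 2 * Real.pi - φt by ring] at h'
      rw [h']
      norm_num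
    rw [step1, step2, step3]
  -- putting everything together
  have e1 := hsplit Rout hRinRout le_rfl (ne_of_lt hlt2)
  have e2 := hsplit Rin le_rfl hRinRout (ne_of_gt hlt1)
  rw [hout_inv] at e1
  rw [hin_inv, mul_zero, sub_zero] at e2
  have hcomb := hannulus
  rw [e1, e2, hψcirc_eq] at hcomb
  have hfinal : ρ * (2 * (Real.pi:ℂ) * Complex.I) = 0 := by
    linear_combination -hcomb
  have h2πI : (2 * (Real.pi:ℂ) * Complex.I) ≠ 0 := by
    rw [← hcdef]
    exact hc0
  have hρ0 : ρ = 0 := by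
    rcases mul_eq_zero.mp hfinal with h | h
    · exact h
    · exact absurd h h2πI
  rw [hρdef] at hρ0
  rcases mul_eq_zero.mp hρ0 with h | h
  · exact absurd h hc0
  · exact h

lemma main (ω : ℂ) (hω : 0 < ω.im) (p1 p2 : ℂ) (hp : p1 - p2 ∉ lattice ω)
    (w : ℂ → ℂ)
    (hw : DifferentiableOn ℂ w (latDom ω p1 p2))
    (hwper1 : ∀ z ∈ latDom ω p1 p2, w (z + 1) = w z)
    (hwperω : ∀ z ∈ latDom ω p1 p2, w (z + ω) = w z)
    (hwp1 : ∃ U ∈ nhds p1, ∃ g : ℂ → ℂ, DifferentiableOn ℂ g U ∧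
      (∀ z ∈ U, z ≠ p1 → g z = (z - p1) * w z) ∧ g p1 = 1)
    (hwp2 : ∃ U ∈ nhds p2, ∃ g : ℂ → ℂ, DifferentiableOn ℂ g U ∧
      (∀ z ∈ U, z ≠ p2 → g z = (z - p2) * w z) ∧ g p2 = -1)
    (F : ℂ → ℂ)
    (hF : DifferentiableOn ℂ F (latDom ω p1 p2))
    (hFper1 : ∀ z ∈ latDom ω p1 p2, F (z + 1) = F z)
    (hFperω : ∀ z ∈ latDom ω p1 p2, F (z + ω) = F z)
    (hFp1 : ∃ U ∈ nhds p1, ∃ g : ℂ → ℂ, DifferentiableOn ℂ g U ∧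
      ∀ z ∈ U, z ≠ p1 → g z = (z - p1) * F z)
    (hFp2 : ∃ U ∈ nhds p2, ∃ g : ℂ → ℂ, DifferentiableOn ℂ g U ∧
      ∀ z ∈ U, z ≠ p2 → g z = (z - p2) * F z) :
    ∃ α β : ℂ, ∀ z ∈ latDom ω p1 p2, F z = α * w z + β := by
  classical
  have hω0 : ω.im ≠ 0 := ne_of_gt hω
  have hopen : IsOpen (latDom ω p1 p2) := by
    have hsq : latDom ω p1 p2 =
        {z : ℂ | z - p1 ∈ lattice ω}ᶜ ∩ {z : ℂ | z - p2 ∈ lattice ω}ᶜ := by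
      ext z
      simp only [latDom, Set.mem_setOf_eq, Set.mem_inter_iff, Set.mem_compl_iff]
    rw [hsq]
    exact ((isClosed_transLat hω0 p1).isOpen_compl).inter
      ((isClosed_transLat hω0 p2).isOpen_compl)
  obtain ⟨U1w, hU1w, gw1, hgw1d, hgw1e, hgw1v⟩ := hwp1
  obtain ⟨U2w, hU2w, gw2, hgw2d, hgw2e, hgw2v⟩ := hwp2
  obtain ⟨U1F, hU1F, gF1, hgF1d, hgF1e⟩ := hFp1
  obtain ⟨U2F, hU2F, gF2, hgF2d, hgF2e⟩ := hFp2
  set α := gF1 p1 with hαdef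
  set G : ℂ → ℂ := fun z => F z - α * w z with hGdef
  set T : Set ℂ := {z : ℂ | z - p2 ∈ lattice ω} with hTdef
  have hGdiff : ∀ z, z - p1 ∉ lattice ω → z ∉ T → DifferentiableAt ℂ G z := by
    intro z h1z h2z
    have hzD : z ∈ latDom ω p1 p2 := ⟨h1z, h2z⟩
    exact (hF.differentiableAt (hopen.mem_nhds hzD)).sub
      ((hw.differentiableAt (hopen.mem_nhds hzD)).const_mul α)
  have hTc : IsClosed T := isClosed_transLat hω0 p2
  have hTst : ∀ z γ, γ ∈ lattice ω → (z ∈ T ↔ z + γ ∈ T) := by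
    intro z γ hγ
    constructor
    · intro h
      have h' := lat_add h hγ
      rwa [show z - p2 + γ = z + γ - p2 by ring] at h'
    · intro h
      have h' := lat_sub h hγ
      rwa [show z + γ - p2 - γ = z - p2 by ring] at h'
  set gG1 : ℂ → ℂ := fun z => gF1 z - α * gw1 z with hgG1def
  have hg1d : DifferentiableOn ℂ gG1 (U1F ∩ U1w) :=
    (hgF1d.mono inter_subset_left).sub ((hgw1d.mono inter_subset_right).const_mul α)
  have hg1e : ∀ z ∈ U1F ∩ U1w, z ≠ p1 → gG1 z = (z - p1) * G z := by
    intro z hz hzp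
    simp only [hgG1def, hGdef]
    rw [hgF1e z hz.1 hzp, hgw1e z hz.2 hzp]
    ring
  have hg10 : gG1 p1 = 0 := by
    simp only [hgG1def]
    rw [hgw1v]
    simp [hαdef]
  obtain ⟨G1, hG1d, hG1val, hG1per1, hG1perω⟩ := ext_lemma hω0 p1 T hTc hTst G
    hGdiff
    (fun z hz1 hz2 => by
      have hzD : z ∈ latDom ω p1 p2 := ⟨hz1, hz2⟩
      simp only [hGdef]
      rw [hFper1 z hzD, hwper1 z hzD])
    (fun z hz1 hz2 => by
      have hzD : z ∈ latDom ω p1 p2 := ⟨hz1, hz2⟩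
      simp only [hGdef]
      rw [hFperω z hzD, hwperω z hzD])
    gG1 (U1F ∩ U1w) (Filter.inter_mem hU1F hU1w) hg1d hg1e hg10
  have hp2np1 : p2 - p1 ∉ lattice ω := by
    intro hc
    apply hp
    have h' := lat_neg hc
    rwa [neg_sub] at h'
  obtain ⟨ε2, hε2pos, hball2⟩ : ∃ ε2 > 0, ball p2 ε2 ⊆
      ({z : ℂ | z - p1 ∈ lattice ω}ᶜ ∩ ({z : ℂ | z - p2 ∈ lattice ω ∧ z ≠ p2})ᶜ) := by
    apply Metric.mem_nhds_iff.mp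
    refine Filter.inter_mem (((isClosed_transLat hω0 p1).isOpen_compl).mem_nhds hp2np1)
      ((((isClosed_transLat_punct hω0 p2).isOpen_compl)).mem_nhds (by simp))
  set U2 : Set ℂ := (U2F ∩ U2w) ∩ ball p2 ε2 with hU2def
  have hU2nhds : U2 ∈ nhds p2 :=
    Filter.inter_mem (Filter.inter_mem hU2F hU2w) (ball_mem_nhds _ hε2pos)
  set gG2 : ℂ → ℂ := fun z => gF2 z - α * gw2 z with hgG2def
  have hg2d : DifferentiableOn ℂ gG2 U2 :=
    ((hgF2d.mono (inter_subset_left.trans inter_subset_left)).sub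
      ((hgw2d.mono (inter_subset_left.trans inter_subset_right)).const_mul α))
  have hg2e : ∀ z ∈ U2, z ≠ p2 → gG2 z = (z - p2) * G1 z := by
    intro z hz hzp
    have hz1 : z - p1 ∉ lattice ω := (hball2 hz.2).1
    have hz2 : z - p2 ∉ lattice ω := fun hc => (hball2 hz.2).2 ⟨hc, hzp⟩
    have hG1z : G1 z = G z := hG1val z hz1 hz2
    rw [hG1z]
    simp only [hgG2def, hGdef]
    rw [hgF2e z hz.1.1 hzp, hgw2e z hz.1.2 hzp]
    ring
  have hres : gG2 p2 = 0 := by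
    apply residue_zero (ω := ω) hω p2 G1 ?_ ?_ ?_ gG2 U2 hU2nhds hg2d hg2e
    · intro z hz
      exact hG1d z hz
    · intro z hz
      exact hG1per1 z hz
    · intro z hz
      exact hG1perω z hz
  obtain ⟨G2, hG2d, hG2val, hG2per1, hG2perω⟩ := ext_lemma hω0 p2 (∅ : Set ℂ)
    isClosed_empty (fun z γ hγ => by simp) G1
    (fun z hz1 _ => hG1d z hz1) (fun z hz1 _ => hG1per1 z hz1)
    (fun z hz1 _ => hG1perω z hz1)
    gG2 U2 hU2nhds hg2d (fun z hz hzp => hg2e z hz hzp) hres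
  have hG2diff : Differentiable ℂ G2 := fun z => hG2d z (by simp)
  set β := G2 0 with hβdef
  have hconst : ∀ z, G2 z = β := fun z => elliptic_const hω0 G2 hG2diff
    (fun z => hG2per1 z (by simp)) (fun z => hG2perω z (by simp)) z 0
  refine ⟨α, β, ?_⟩
  intro z hz
  have h1z : z - p1 ∉ lattice ω := hz.1
  have h2z : z - p2 ∉ lattice ω := hz.2
  have e1 : G2 z = G1 z := hG2val z h2z (by simp)
  have e2 : G1 z = G z := hG1val z h1z h2z
  have e3 : G2 z = β := hconst z
  have e4 : G z = β := by
    rw [← e2, ← e1]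
    exact e3
  have e5 : F z - α * w z = β := by
    have hGz : G z = F z - α * w z := by rw [hGdef]
    rw [← hGz]
    exact e4
  linear_combination e5
end SL11

/-- Let `w` be `Γ`-periodic holomorphic on `ℂ∖((p1+Γ)∪(p2+Γ))` with simple
poles of residues `1` and `−1` at `p1` and `p2`, and let `F` be `Γ`-periodic holomorphic on
the same domain with at most simple poles at `p1` and `p2`. Then `F = α·w + β` for some
`α, β ∈ ℂ`. -/
theorem stmt_11 (ω : ℂ) (hω : ω.im ≠ 0) (p1 p2 : ℂ) (hp : p1 - p2 ∉ lattice ω)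
    (w : ℂ → ℂ)
    (hw : DifferentiableOn ℂ w (latDom ω p1 p2))
    (hwper1 : ∀ z ∈ latDom ω p1 p2, w (z + 1) = w z)
    (hwperω : ∀ z ∈ latDom ω p1 p2, w (z + ω) = w z)
    (hwp1 : ∃ U ∈ nhds p1, ∃ g : ℂ → ℂ, DifferentiableOn ℂ g U ∧
      (∀ z ∈ U, z ≠ p1 → g z = (z - p1) * w z) ∧ g p1 = 1)
    (hwp2 : ∃ U ∈ nhds p2, ∃ g : ℂ → ℂ, DifferentiableOn ℂ g U ∧
      (∀ z ∈ U, z ≠ p2 → g z = (z - p2) * w z) ∧ g p2 = -1)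
    (F : ℂ → ℂ)
    (hF : DifferentiableOn ℂ F (latDom ω p1 p2))
    (hFper1 : ∀ z ∈ latDom ω p1 p2, F (z + 1) = F z)
    (hFperω : ∀ z ∈ latDom ω p1 p2, F (z + ω) = F z)
    (hFp1 : ∃ U ∈ nhds p1, ∃ g : ℂ → ℂ, DifferentiableOn ℂ g U ∧
      ∀ z ∈ U, z ≠ p1 → g z = (z - p1) * F z)
    (hFp2 : ∃ U ∈ nhds p2, ∃ g : ℂ → ℂ, DifferentiableOn ℂ g U ∧
      ∀ z ∈ U, z ≠ p2 → g z = (z - p2) * F z) :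
    ∃ α β : ℂ, ∀ z ∈ latDom ω p1 p2, F z = α * w z + β := by
  by_cases hpos : 0 < ω.im
  · exact SL11.main ω hpos p1 p2 hp w hw hwper1 hwperω hwp1 hwp2 F hF hFper1 hFperω hFp1 hFp2
  · have hneg : 0 < (-ω).im := by
      rw [Complex.neg_im]
      have := lt_of_le_of_ne (not_lt.mp hpos) hω
      linarith
    have hlat : lattice (-ω) = lattice ω := SL11.lat_neg_omega
    have hdom : latDom (-ω) p1 p2 = latDom ω p1 p2 := by
      unfold latDom
      rw [hlat]
    have hstab : ∀ z ∈ latDom ω p1 p2, z - ω ∈ latDom ω p1 p2 := by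
      rintro z ⟨h1z, h2z⟩
      constructor
      · intro hc
        apply h1z
        have h' := SL11.lat_add hc (SL11.lat_omega ω)
        rwa [show z - ω - p1 + ω = z - p1 by ring] at h'
      · intro hc
        apply h2z
        have h' := SL11.lat_add hc (SL11.lat_omega ω)
        rwa [show z - ω - p2 + ω = z - p2 by ring] at h'
    have hwperω' : ∀ z ∈ latDom (-ω) p1 p2, w (z + -ω) = w z := by
      rw [hdom]
      intro z hz
      rw [show z + -ω = z - ω by ring]
      have h' := hwperω (z - ω) (hstab z hz)
      rw [sub_add_cancel] at h'
      exact h'.symm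
    have hFperω' : ∀ z ∈ latDom (-ω) p1 p2, F (z + -ω) = F z := by
      rw [hdom]
      intro z hz
      rw [show z + -ω = z - ω by ring]
      have h' := hFperω (z - ω) (hstab z hz)
      rw [sub_add_cancel] at h'
      exact h'.symm
    have hmain := SL11.main (-ω) hneg p1 p2 (by rwa [hlat]) w (by rwa [hdom])
      (by rw [hdom]; exact hwper1) hwperω' hwp1 hwp2 F (by rwa [hdom])
      (by rw [hdom]; exact hFper1) hFperω' hFp1 hFp2
    rwa [hdom] at hmain
end

section
/- Fix ω ∈ ℂ with ω ∉ ℝ, let Γ = {m + nω : m, n ∈ ℤ}, and let p1, p2 ∈ ℂ with p1 − p2 ∉ Γ. Let P1, P2 : ℂ∖((p1+Γ) ∪ (p2+Γ)) → ℂ be Γ-periodic functions such that for l = 1, 2: P_l is holomorphic on ℂ∖(p_l+Γ), the function z ↦ P_l(z) − (z−p_l)^{−2} extends holomorphically across p_l (principal part exactly 1/(z−p_l)²), and P_l(p_{3−l}) = 0. Let w : ℂ∖((p1+Γ) ∪ (p2+Γ)) → ℂ be holomorphic and Γ-periodic with a simple pole at p1 with residue 1 and a simple pole at p2 with residue −1.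 If A, B, C, D, E, F, G, H, J, K ∈ ℂ satisfy A·P1² + B·P2² + C·P1·w + D·P2·w + E·P1 + F·P2 + G·w² + H·P1·P2 + J·w + K = 0 on ℂ∖((p1+Γ) ∪ (p2+Γ)), then A = B = 0, C = D = 0, E + G = 0, and F + G = 0. -/
open Complex Metric Set

open Filter Topology

lemma lattice_neg {ω z : ℂ} (hz : z ∈ lattice ω) : -z ∈ lattice ω := by
  obtain ⟨m, n, rfl⟩ := hz
  exact ⟨-m, -n, by push_cast; ring⟩

lemma lattice_isClosed {ω : ℂ} (hω : ω.im ≠ 0) : IsClosed (lattice ω) := by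
  have hkey : lattice ω =
      (fun z : ℂ => (z.re - (z.im / ω.im) * ω.re, z.im / ω.im)) ⁻¹'
        ((Set.range (Int.cast : ℤ → ℝ)) ×ˢ (Set.range (Int.cast : ℤ → ℝ))) := by
    ext z
    simp only [lattice, Set.mem_setOf_eq, Set.mem_preimage, Set.mem_prod, Set.mem_range]
    constructor
    · rintro ⟨m, n, rfl⟩
      have him : ((m : ℂ) + (n : ℂ) * ω).im = n * ω.im := by
        simp [Complex.add_im, Complex.mul_im]
      have hre : ((m : ℂ) + (n : ℂ) * ω).re = m + n * ω.re := by
        simp [Complex.add_re, Complex.mul_re]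
      refine ⟨⟨m, ?_⟩, ⟨n, ?_⟩⟩
      · rw [him, hre]; field_simp; ring
      · rw [him]; field_simp
    · rintro ⟨⟨m, hm⟩, ⟨n, hn⟩⟩
      have him : z.im = n * ω.im := by
        rw [hn]; field_simp
      have hre : z.re = m + n * ω.re := by
        conv_lhs => rw [show z.re = (z.re - (z.im / ω.im) * ω.re) + (z.im / ω.im) * ω.re by ring]
        rw [← hm, ← hn]
      refine ⟨m, n, ?_⟩
      apply Complex.ext
      · simp only [Complex.add_re, Complex.intCast_re, Complex.mul_re,
          Complex.intCast_im, Complex.intCast_re]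
        rw [hre]; ring
      · simp only [Complex.add_im, Complex.intCast_im, Complex.mul_im,
          Complex.intCast_re, Complex.intCast_im]
        rw [him]; ring
  rw [hkey]
  have hcont : Continuous (fun z : ℂ => (z.re - (z.im / ω.im) * ω.re, z.im / ω.im)) := by
    exact (Complex.continuous_re.sub ((Complex.continuous_im.div_const _).mul
      continuous_const)).prodMk (Complex.continuous_im.div_const _)
  exact (Int.isClosedEmbedding_coe_real.isClosed_range.prod
    Int.isClosedEmbedding_coe_real.isClosed_range).preimage hcont

lemma lattice_discrete {ω : ℂ} (hω : ω.im ≠ 0) {z : ℂ} (hz : z ∈ lattice ω) (h0 : z ≠ 0) :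
    min 1 |ω.im| ≤ ‖z‖ := by
  obtain ⟨m, n, rfl⟩ := hz
  by_cases hn : n = 0
  · subst hn
    simp only [Int.cast_zero, zero_mul, add_zero] at h0 ⊢
    have hm : m ≠ 0 := by exact_mod_cast h0
    have h1 : (1 : ℝ) ≤ |(m : ℝ)| := by
      exact_mod_cast Int.one_le_abs (by exact_mod_cast hm)
    calc min 1 |ω.im| ≤ 1 := min_le_left _ _
      _ ≤ |(m : ℝ)| := h1
      _ = ‖(m : ℂ)‖ := by rw [Complex.norm_intCast]
  · have him : ((m : ℂ) + (n : ℂ) * ω).im = n * ω.im := by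
      simp [Complex.add_im, Complex.mul_im]
    have h1 : |ω.im| ≤ |((m : ℂ) + (n : ℂ) * ω).im| := by
      rw [him, abs_mul]
      have : (1 : ℝ) ≤ |(n : ℝ)| := by
        exact_mod_cast Int.one_le_abs (by exact_mod_cast hn)
      nlinarith [abs_nonneg ω.im]
    calc min 1 |ω.im| ≤ |ω.im| := min_le_right _ _
      _ ≤ |((m : ℂ) + (n : ℂ) * ω).im| := h1
      _ ≤ ‖(m : ℂ) + (n : ℂ) * ω‖ := Complex.abs_im_le_norm _

/-- Key analytic lemma: coefficient extraction at a point where `P` has principal part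
`1/(z-a)²`, `w` has a simple pole of residue `r`, and `Q` tends to `0`. -/
lemma key_extract {a : ℂ} {S : Set ℂ} {P Q w : ℂ → ℂ} {r A B C D E F G H J K : ℂ}
    (hr : r ≠ 0)
    (hS : ∀ᶠ z in 𝓝[≠] a, z ∈ S)
    (heq : ∀ z ∈ S,
      A * (P z)^2 + B * (Q z)^2 + C * (P z) * (w z) + D * (Q z) * (w z)
        + E * (P z) + F * (Q z) + G * (w z)^2 + H * (P z) * (Q z)
        + J * (w z) + K = 0)
    (hP : Tendsto (fun z => (z - a)^2 * P z) (𝓝[≠] a) (𝓝 1))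
    (hw : Tendsto (fun z => (z - a) * w z) (𝓝[≠] a) (𝓝 r))
    (hQ : Tendsto Q (𝓝[≠] a) (𝓝 0)) :
    A = 0 ∧ C = 0 ∧ E + G * r ^ 2 = 0 := by
  have hq : Tendsto (fun z : ℂ => z - a) (𝓝[≠] a) (𝓝 0) := by
    have h := ((continuous_id.sub (continuous_const (y := a))).tendsto a).mono_left
      (nhdsWithin_le_nhds (s := {a}ᶜ))
    simpa [Pi.sub_def] using h
  have hzero : ∀ᶠ z in 𝓝[≠] a,
      A * (P z)^2 + B * (Q z)^2 + C * (P z) * (w z) + D * (Q z) * (w z)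
        + E * (P z) + F * (Q z) + G * (w z)^2 + H * (P z) * (Q z)
        + J * (w z) + K = 0 := by
    filter_upwards [hS] with z hz using heq z hz
  -- Step 1: A = 0
  have hA : A = 0 := by
    have comb := (((((((((((hP.pow 2).const_mul A).add
      (((hQ.pow 2).mul (hq.pow 4)).const_mul B)).add
      (((hP.mul hw).mul hq).const_mul C)).add
      (((hQ.mul hw).mul (hq.pow 3)).const_mul D)).add
      ((hP.mul (hq.pow 2)).const_mul E)).add
      ((hQ.mul (hq.pow 4)).const_mul F)).add
      (((hw.pow 2).mul (hq.pow 2)).const_mul G)).add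
      (((hP.mul hQ).mul (hq.pow 2)).const_mul H)).add
      ((hw.mul (hq.pow 3)).const_mul J)).add
      ((hq.pow 4).const_mul K))
    have comb' : Tendsto (fun z =>
        (z - a)^4 * (A * (P z)^2 + B * (Q z)^2 + C * (P z) * (w z) + D * (Q z) * (w z)
        + E * (P z) + F * (Q z) + G * (w z)^2 + H * (P z) * (Q z)
        + J * (w z) + K)) (𝓝[≠] a) (𝓝 A) := by
      have hval : A = A * 1 ^ 2 + B * (0 ^ 2 * 0 ^ 4) + C * (1 * r * 0) + D * (0 * r * 0 ^ 3)
          + E * (1 * 0 ^ 2) + F * (0 * 0 ^ 4) + G * (r ^ 2 * 0 ^ 2) + H * (1 * 0 * 0 ^ 2)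
          + J * (r * 0 ^ 3) + K * (0:ℂ) ^ 4 := by ring
      rw [hval]
      exact comb.congr (fun z => by ring)
    have hzt : Tendsto (fun z =>
        (z - a)^4 * (A * (P z)^2 + B * (Q z)^2 + C * (P z) * (w z) + D * (Q z) * (w z)
        + E * (P z) + F * (Q z) + G * (w z)^2 + H * (P z) * (Q z)
        + J * (w z) + K)) (𝓝[≠] a) (𝓝 0) := by
      refine Tendsto.congr' ?_ tendsto_const_nhds
      filter_upwards [hzero] with z hz
      rw [hz, mul_zero]
    exact (tendsto_nhds_unique comb' hzt)
  subst hA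
  -- Step 2: C = 0
  have hC : C = 0 := by
    have comb := ((((((((((hQ.pow 2).mul (hq.pow 3)).const_mul B).add
      ((hP.mul hw).const_mul C)).add
      (((hQ.mul hw).mul (hq.pow 2)).const_mul D)).add
      ((hP.mul hq).const_mul E)).add
      ((hQ.mul (hq.pow 3)).const_mul F)).add
      (((hw.pow 2).mul hq).const_mul G)).add
      (((hP.mul hQ).mul hq).const_mul H)).add
      ((hw.mul (hq.pow 2)).const_mul J)).add
      ((hq.pow 3).const_mul K)
    have comb' : Tendsto (fun z =>
        (z - a)^3 * (0 * (P z)^2 + B * (Q z)^2 + C * (P z) * (w z) + D * (Q z) * (w z)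
        + E * (P z) + F * (Q z) + G * (w z)^2 + H * (P z) * (Q z)
        + J * (w z) + K)) (𝓝[≠] a) (𝓝 (C * r)) := by
      have hval : C * r = B * (0 ^ 2 * 0 ^ 3) + C * (1 * r) + D * (0 * r * 0 ^ 2)
          + E * (1 * 0) + F * (0 * 0 ^ 3) + G * (r ^ 2 * 0) + H * (1 * 0 * 0)
          + J * (r * 0 ^ 2) + K * (0:ℂ) ^ 3 := by ring
      rw [hval]
      exact comb.congr (fun z => by ring)
    have hzt : Tendsto (fun z =>
        (z - a)^3 * (0 * (P z)^2 + B * (Q z)^2 + C * (P z) * (w z) + D * (Q z) * (w z)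
        + E * (P z) + F * (Q z) + G * (w z)^2 + H * (P z) * (Q z)
        + J * (w z) + K)) (𝓝[≠] a) (𝓝 0) := by
      refine Tendsto.congr' ?_ tendsto_const_nhds
      filter_upwards [hzero] with z hz
      rw [hz, mul_zero]
    have : C * r = 0 := tendsto_nhds_unique comb' hzt
    exact (mul_eq_zero.mp this).resolve_right hr
  subst hC
  -- Step 3: E + G * r^2 = 0
  refine ⟨rfl, rfl, ?_⟩
  have comb := (((((((((hQ.pow 2).mul (hq.pow 2)).const_mul B).add
    (((hQ.mul hw).mul hq).const_mul D)).add
    (hP.const_mul E)).add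
    ((hQ.mul (hq.pow 2)).const_mul F)).add
    ((hw.pow 2).const_mul G)).add
    ((hP.mul hQ).const_mul H)).add
    ((hw.mul hq).const_mul J)).add
    ((hq.pow 2).const_mul K)
  have comb' : Tendsto (fun z =>
      (z - a)^2 * (0 * (P z)^2 + B * (Q z)^2 + 0 * (P z) * (w z) + D * (Q z) * (w z)
      + E * (P z) + F * (Q z) + G * (w z)^2 + H * (P z) * (Q z)
      + J * (w z) + K)) (𝓝[≠] a) (𝓝 (E + G * r ^ 2)) := by
    have hval : E + G * r ^ 2 = B * (0 ^ 2 * 0 ^ 2) + D * (0 * r * 0)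
        + E * 1 + F * (0 * 0 ^ 2) + G * r ^ 2 + H * (1 * 0)
        + J * (r * 0) + K * (0:ℂ) ^ 2 := by ring
    rw [hval]
    exact comb.congr (fun z => by ring)
  have hzt : Tendsto (fun z =>
      (z - a)^2 * (0 * (P z)^2 + B * (Q z)^2 + 0 * (P z) * (w z) + D * (Q z) * (w z)
      + E * (P z) + F * (Q z) + G * (w z)^2 + H * (P z) * (Q z)
      + J * (w z) + K)) (𝓝[≠] a) (𝓝 0) := by
    refine Tendsto.congr' ?_ tendsto_const_nhds
    filter_upwards [hzero] with z hz
    rw [hz, mul_zero]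
  exact tendsto_nhds_unique comb' hzt

/-- Eventually near `p` (punctured), `z - p ∉ lattice ω`. -/
lemma eventually_sub_self_not_lattice {ω : ℂ} (hω : ω.im ≠ 0) (p : ℂ) :
    ∀ᶠ z in 𝓝[≠] p, z - p ∉ lattice ω := by
  have hpos : 0 < min 1 |ω.im| := lt_min one_pos (abs_pos.mpr hω)
  have hball : Metric.ball p (min 1 |ω.im|) ∈ 𝓝 p := Metric.ball_mem_nhds _ hpos
  filter_upwards [mem_nhdsWithin_of_mem_nhds hball, self_mem_nhdsWithin] with z hz hzne hmem
  have hzp : z ≠ p := hzne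
  have h0 : z - p ≠ 0 := sub_ne_zero.mpr hzp
  have h1 : min 1 |ω.im| ≤ ‖z - p‖ := lattice_discrete hω hmem h0
  have h2 : ‖z - p‖ < min 1 |ω.im| := by
    rw [← Complex.dist_eq]; exact hz
  linarith

/-- Eventually near `p` (punctured), `z - q ∉ lattice ω`, given `p - q ∉ lattice ω`. -/
lemma eventually_sub_not_lattice {ω : ℂ} (hω : ω.im ≠ 0) {p q : ℂ}
    (hpq : p - q ∉ lattice ω) :
    ∀ᶠ z in 𝓝[≠] p, z - q ∉ lattice ω := by
  have hopen : IsOpen {z : ℂ | z - q ∉ lattice ω} := by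
    have : {z : ℂ | z - q ∉ lattice ω} = (fun z => z - q) ⁻¹' (lattice ω)ᶜ := rfl
    rw [this]
    exact ((lattice_isClosed hω).isOpen_compl).preimage (continuous_id.sub continuous_const)
  have hmem : {z : ℂ | z - q ∉ lattice ω} ∈ 𝓝 p := hopen.mem_nhds hpq
  filter_upwards [mem_nhdsWithin_of_mem_nhds hmem] with z hz using hz

/-- Tendsto of `(z-p)² P z` to 1 from the principal-part hypothesis. -/
lemma tendsto_sq_mul {p : ℂ} {P : ℂ → ℂ}
    (hpp : ∃ U ∈ nhds p, ∃ g : ℂ → ℂ, DifferentiableOn ℂ g U ∧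
      ∀ z ∈ U, z ≠ p → g z = P z - 1 / (z - p)^2) :
    Filter.Tendsto (fun z => (z - p)^2 * P z) (𝓝[≠] p) (𝓝 1) := by
  obtain ⟨U, hU, g, hg, hgeq⟩ := hpp
  have hgc : ContinuousAt g p := (hg.differentiableAt hU).continuousAt
  have t : Tendsto (fun z => (z - p)^2 * g z + 1) (𝓝[≠] p) (𝓝 1) := by
    have h1 : ContinuousAt (fun z : ℂ => (z - p)^2 * g z + 1) p := by
      exact ((((continuous_id.sub continuous_const).pow 2).continuousAt).mul hgc).add
        continuousAt_const
    have h2 := h1.tendsto.mono_left (nhdsWithin_le_nhds (s := {p}ᶜ))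
    simpa using h2
  refine t.congr' ?_
  filter_upwards [mem_nhdsWithin_of_mem_nhds hU, self_mem_nhdsWithin] with z hzU hzne
  have hzp : z ≠ p := hzne
  have h0 : z - p ≠ 0 := sub_ne_zero.mpr hzp
  rw [hgeq z hzU hzp]
  field_simp
  ring

/-- Tendsto of `(z-p) w z` to the residue from the simple-pole hypothesis. -/
lemma tendsto_res {p r : ℂ} {w : ℂ → ℂ}
    (hwp : ∃ U ∈ nhds p, ∃ g : ℂ → ℂ, DifferentiableOn ℂ g U ∧
      (∀ z ∈ U, z ≠ p → g z = (z - p) * w z) ∧ g p = r) :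
    Filter.Tendsto (fun z => (z - p) * w z) (𝓝[≠] p) (𝓝 r) := by
  obtain ⟨U, hU, g, hg, hgeq, hgp⟩ := hwp
  have hgc : ContinuousAt g p := (hg.differentiableAt hU).continuousAt
  have t : Tendsto g (𝓝[≠] p) (𝓝 r) := by
    have h2 := hgc.tendsto.mono_left (nhdsWithin_le_nhds (s := {p}ᶜ))
    rwa [hgp] at h2
  refine t.congr' ?_
  filter_upwards [mem_nhdsWithin_of_mem_nhds hU, self_mem_nhdsWithin] with z hzU hzne
  exact hgeq z hzU hzne

/-- Let `P1, P2` be `Γ`-periodic, with `P_l` holomorphic off `p_l + Γ`, having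
principal part exactly `1/(z−p_l)²` at `p_l` and vanishing at `p_{3−l}`, and let `w` be
`Γ`-periodic holomorphic off `(p1+Γ) ∪ (p2+Γ)` with simple poles of residues `1`, `−1` at
`p1`, `p2`. If `A·P1² + B·P2² + C·P1·w + D·P2·w + E·P1 + F·P2 + G·w² + H·P1·P2 + J·w + K = 0`
on `ℂ∖((p1+Γ) ∪ (p2+Γ))`, then `A = B = 0`, `C = D = 0`, `E + G = 0` and `F + G = 0`. -/
theorem stmt_13 (ω : ℂ) (hω : ω.im ≠ 0) (p1 p2 : ℂ) (hp : p1 - p2 ∉ lattice ω)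
    (P1 P2 : ℂ → ℂ)
    (hP1 : DifferentiableOn ℂ P1 {z : ℂ | z - p1 ∉ lattice ω})
    (hP2 : DifferentiableOn ℂ P2 {z : ℂ | z - p2 ∉ lattice ω})
    (hP1per1 : ∀ z, z - p1 ∉ lattice ω → P1 (z + 1) = P1 z)
    (hP1perω : ∀ z, z - p1 ∉ lattice ω → P1 (z + ω) = P1 z)
    (hP2per1 : ∀ z, z - p2 ∉ lattice ω → P2 (z + 1) = P2 z)
    (hP2perω : ∀ z, z - p2 ∉ lattice ω → P2 (z + ω) = P2 z)
    (hP1pp : ∃ U ∈ nhds p1, ∃ g : ℂ → ℂ, DifferentiableOn ℂ g U ∧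
      ∀ z ∈ U, z ≠ p1 → g z = P1 z - 1 / (z - p1)^2)
    (hP2pp : ∃ U ∈ nhds p2, ∃ g : ℂ → ℂ, DifferentiableOn ℂ g U ∧
      ∀ z ∈ U, z ≠ p2 → g z = P2 z - 1 / (z - p2)^2)
    (hP1z : P1 p2 = 0) (hP2z : P2 p1 = 0)
    (w : ℂ → ℂ)
    (hw : DifferentiableOn ℂ w (latDom ω p1 p2))
    (hwper1 : ∀ z ∈ latDom ω p1 p2, w (z + 1) = w z)
    (hwperω : ∀ z ∈ latDom ω p1 p2, w (z + ω) = w z)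
    (hwp1 : ∃ U ∈ nhds p1, ∃ g : ℂ → ℂ, DifferentiableOn ℂ g U ∧
      (∀ z ∈ U, z ≠ p1 → g z = (z - p1) * w z) ∧ g p1 = 1)
    (hwp2 : ∃ U ∈ nhds p2, ∃ g : ℂ → ℂ, DifferentiableOn ℂ g U ∧
      (∀ z ∈ U, z ≠ p2 → g z = (z - p2) * w z) ∧ g p2 = -1)
    (A B C D E F G H J K : ℂ)
    (heq : ∀ z ∈ latDom ω p1 p2,
      A * (P1 z)^2 + B * (P2 z)^2 + C * (P1 z) * (w z) + D * (P2 z) * (w z)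
        + E * (P1 z) + F * (P2 z) + G * (w z)^2 + H * (P1 z) * (P2 z)
        + J * (w z) + K = 0) :
    A = 0 ∧ B = 0 ∧ C = 0 ∧ D = 0 ∧ E + G = 0 ∧ F + G = 0 := by
  have hp' : p2 - p1 ∉ lattice ω := by
    intro h
    exact hp (by simpa using lattice_neg h)
  -- membership of latDom near p1 and p2
  have hS1 : ∀ᶠ z in 𝓝[≠] p1, z ∈ latDom ω p1 p2 := by
    filter_upwards [eventually_sub_self_not_lattice hω p1,
      eventually_sub_not_lattice hω hp] with z h1 h2
    exact ⟨h1, h2⟩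
  have hS2 : ∀ᶠ z in 𝓝[≠] p2, z ∈ latDom ω p1 p2 := by
    filter_upwards [eventually_sub_self_not_lattice hω p2,
      eventually_sub_not_lattice hω hp'] with z h1 h2
    exact ⟨h2, h1⟩
  -- continuity of P2 at p1, P1 at p2
  have hopen1 : IsOpen {z : ℂ | z - p1 ∉ lattice ω} := by
    have : {z : ℂ | z - p1 ∉ lattice ω} = (fun z => z - p1) ⁻¹' (lattice ω)ᶜ := rfl
    rw [this]
    exact ((lattice_isClosed hω).isOpen_compl).preimage (continuous_id.sub continuous_const)
  have hopen2 : IsOpen {z : ℂ | z - p2 ∉ lattice ω} := by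
    have : {z : ℂ | z - p2 ∉ lattice ω} = (fun z => z - p2) ⁻¹' (lattice ω)ᶜ := rfl
    rw [this]
    exact ((lattice_isClosed hω).isOpen_compl).preimage (continuous_id.sub continuous_const)
  have hQ1 : Filter.Tendsto P2 (𝓝[≠] p1) (𝓝 0) := by
    have hc : ContinuousAt P2 p1 :=
      (hP2.differentiableAt (hopen2.mem_nhds hp)).continuousAt
    have := hc.tendsto.mono_left (nhdsWithin_le_nhds (s := {p1}ᶜ))
    rwa [hP2z] at this
  have hQ2 : Filter.Tendsto P1 (𝓝[≠] p2) (𝓝 0) := by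
    have hc : ContinuousAt P1 p2 :=
      (hP1.differentiableAt (hopen1.mem_nhds hp')).continuousAt
    have := hc.tendsto.mono_left (nhdsWithin_le_nhds (s := {p2}ᶜ))
    rwa [hP1z] at this
  -- extraction at p1
  have h1 := key_extract (a := p1) (S := latDom ω p1 p2) (P := P1) (Q := P2) (w := w)
    (r := 1) (A := A) (B := B) (C := C) (D := D) (E := E) (F := F) (G := G) (H := H)
    (J := J) (K := K) one_ne_zero hS1 heq (tendsto_sq_mul hP1pp) (tendsto_res hwp1) hQ1
  -- extraction at p2 (roles swapped)
  have heq2 : ∀ z ∈ latDom ω p1 p2,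
      B * (P2 z)^2 + A * (P1 z)^2 + D * (P2 z) * (w z) + C * (P1 z) * (w z)
        + F * (P2 z) + E * (P1 z) + G * (w z)^2 + H * (P2 z) * (P1 z)
        + J * (w z) + K = 0 := by
    intro z hz
    linear_combination heq z hz
  have h2 := key_extract (a := p2) (S := latDom ω p1 p2) (P := P2) (Q := P1) (w := w)
    (r := -1) (A := B) (B := A) (C := D) (D := C) (E := F) (F := E) (G := G) (H := H)
    (J := J) (K := K) (by norm_num) hS2 heq2 (tendsto_sq_mul hP2pp) (tendsto_res hwp2) hQ2
  obtain ⟨hA, hC, hEG⟩ := h1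
  obtain ⟨hB, hD, hFG⟩ := h2
  refine ⟨hA, hB, hC, hD, ?_, ?_⟩
  · linear_combination hEG
  · linear_combination hFG
end

section
/- Let ρ > 0, let φ : B_ρ(0) → ℂ be holomorphic on the open ball B_ρ(0) ⊆ ℂ, and let g : B_ρ(0)∖{0} → ℝ be continuously differentiable with 2·∂_z g(z) = 1/z + φ(z) for all z ∈ B_ρ(0)∖{0}. Then there exists a holomorphic function ψ : B_ρ(0) → ℂ such that g(z) = log|z| + Re(ψ(z)) for all z ∈ B_ρ(0)∖{0}; in particular g(z) − log|z| extends to a harmonic function on B_ρ(0) and g(z) → −∞ as z → 0. -/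
open Complex Metric Set
open scoped NNReal ENNReal

/-- A function with zero derivative on an open preconnected set is constant there. -/
lemma aux_const_of_fderiv_zero {f : ℂ → ℝ} {s : Set ℂ} (hs : IsOpen s)
    (hps : IsPreconnected s) (hf : ∀ x ∈ s, HasFDerivAt f (0 : ℂ →L[ℝ] ℝ) x)
    {x y : ℂ} (hx : x ∈ s) (hy : y ∈ s) : f x = f y := by
  -- locally constant via convex balls
  have key : ∀ z ∈ s, ∃ ε > 0, ball z ε ⊆ s ∧ ∀ w ∈ ball z ε, f w = f z := by
    intro z hz
    obtain ⟨ε, hε, hball⟩ := Metric.isOpen_iff.1 hs z hz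
    refine ⟨ε, hε, hball, fun w hw => ?_⟩
    have hdiff : DifferentiableOn ℝ f (ball z ε) := fun u hu =>
      ((hf u (hball hu)).differentiableAt).differentiableWithinAt
    refine (convex_ball z ε).is_const_of_fderivWithin_eq_zero hdiff (fun u hu => ?_) hw
      (mem_ball_self hε)
    rw [fderivWithin_of_isOpen isOpen_ball hu]
    exact (hf u (hball hu)).fderiv
  set u : Set ℂ := {z ∈ s | f z = f y} with hu_def
  set v : Set ℂ := {z ∈ s | f z ≠ f y} with hv_def
  have hu_open : IsOpen u := by
    rw [Metric.isOpen_iff]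
    intro z hz
    obtain ⟨ε, hε, hsub, hconst⟩ := key z hz.1
    exact ⟨ε, hε, fun w hw => ⟨hsub hw, (hconst w hw).trans hz.2⟩⟩
  have hv_open : IsOpen v := by
    rw [Metric.isOpen_iff]
    intro z hz
    obtain ⟨ε, hε, hsub, hconst⟩ := key z hz.1
    exact ⟨ε, hε, fun w hw => ⟨hsub hw, by rw [hconst w hw]; exact hz.2⟩⟩
  by_contra hxy
  have hne : (s ∩ (u ∩ v)).Nonempty :=
    hps u v hu_open hv_open (fun z hz => by
        by_cases h : f z = f y
        · exact Or.inl ⟨hz, h⟩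
        · exact Or.inr ⟨hz, h⟩)
      ⟨y, hy, hy, rfl⟩ ⟨x, hx, hx, hxy⟩
  obtain ⟨z, _, hzu, hzv⟩ := hne
  exact hzv.2 hzu.2

/-- The punctured ball in `ℂ` is preconnected. -/
lemma aux_preconnected (ρ : ℝ) (hρ : 0 < ρ) :
    IsPreconnected (ball (0 : ℂ) ρ \ {0}) := by
  set A : Set ℂ := ball (0 : ℂ) ρ ∩ {z : ℂ | 0 < z.re}
  set B : Set ℂ := ball (0 : ℂ) ρ ∩ {z : ℂ | 0 < z.im}
  set C : Set ℂ := ball (0 : ℂ) ρ ∩ {z : ℂ | z.re < 0}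
  set D : Set ℂ := ball (0 : ℂ) ρ ∩ {z : ℂ | z.im < 0}
  have hA : IsPreconnected A :=
    ((convex_ball _ _).inter (convex_halfSpace_re_gt 0)).isPreconnected
  have hB : IsPreconnected B :=
    ((convex_ball _ _).inter (convex_halfSpace_im_gt 0)).isPreconnected
  have hC : IsPreconnected C :=
    ((convex_ball _ _).inter (convex_halfSpace_re_lt 0)).isPreconnected
  have hD : IsPreconnected D :=
    ((convex_ball _ _).inter (convex_halfSpace_im_lt 0)).isPreconnected
  have hmem : ∀ a b : ℝ, |a| = ρ/4 → |b| = ρ/4 → (⟨a, b⟩ : ℂ) ∈ ball (0:ℂ) ρ := by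
    intro a b ha hb
    rw [mem_ball_zero_iff]
    calc ‖(⟨a, b⟩ : ℂ)‖ ≤ |(⟨a,b⟩:ℂ).re| + |(⟨a,b⟩:ℂ).im| :=
          Complex.norm_le_abs_re_add_abs_im _
      _ = ρ/4 + ρ/4 := by rw [show (⟨a,b⟩:ℂ).re = a from rfl, show (⟨a,b⟩:ℂ).im = b from rfl,
            ha, hb]
      _ < ρ := by linarith
  have habs : |ρ/4| = ρ/4 := abs_of_pos (by linarith)
  have habs' : |-(ρ/4)| = ρ/4 := by rw [abs_neg]; exact habs
  have hCD : IsPreconnected (C ∪ D) := by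
    apply hC.union (⟨-(ρ/4), -(ρ/4)⟩ : ℂ) ?_ ?_ hD
    · exact ⟨hmem _ _ habs' habs', by simp; linarith⟩
    · exact ⟨hmem _ _ habs' habs', by simp; linarith⟩
  have hBCD : IsPreconnected (B ∪ (C ∪ D)) := by
    apply hB.union (⟨-(ρ/4), ρ/4⟩ : ℂ) ?_ ?_ hCD
    · exact ⟨hmem _ _ habs' habs, by simp; linarith⟩
    · exact Or.inl ⟨hmem _ _ habs' habs, by simp; linarith⟩
  have hABCD : IsPreconnected (A ∪ (B ∪ (C ∪ D))) := by
    apply hA.union (⟨ρ/4, ρ/4⟩ : ℂ) ?_ ?_ hBCD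
    · exact ⟨hmem _ _ habs habs, by simp; linarith⟩
    · exact Or.inl ⟨hmem _ _ habs habs, by simp; linarith⟩
  have heq : ball (0 : ℂ) ρ \ {0} = A ∪ (B ∪ (C ∪ D)) := by
    ext z
    simp only [mem_diff, mem_singleton_iff, mem_union, mem_inter_iff, mem_setOf_eq,
      A, B, C, D]
    constructor
    · rintro ⟨hz, hz0⟩
      have : z.re ≠ 0 ∨ z.im ≠ 0 := by
        by_contra h
        push_neg at h
        exact hz0 (Complex.ext h.1 h.2)
      rcases this with h | h
      · rcases h.lt_or_gt with h | h
        · exact Or.inr (Or.inr (Or.inl ⟨hz, h⟩))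
        · exact Or.inl ⟨hz, h⟩
      · rcases h.lt_or_gt with h | h
        · exact Or.inr (Or.inr (Or.inr ⟨hz, h⟩))
        · exact Or.inr (Or.inl ⟨hz, h⟩)
    · rintro (⟨hz, h⟩ | ⟨hz, h⟩ | ⟨hz, h⟩ | ⟨hz, h⟩) <;>
        refine ⟨hz, fun h0 => ?_⟩ <;> rw [h0] at h <;> simp at h
  rw [heq]
  exact hABCD

/-- If `φ` is holomorphic on the ball `B_ρ(0)` and `g : B_ρ(0)∖{0} → ℝ` is `C¹`
with `2·∂_z g(z) = 1/z + φ(z)` (Wirtinger derivative), then `g(z) = log|z| + Re(ψ(z))` for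
some holomorphic `ψ` on `B_ρ(0)`; in particular `g(z) → −∞` as `z → 0`. -/
theorem stmt_17 (ρ : ℝ) (hρ : 0 < ρ) (φ : ℂ → ℂ)
    (hφ : DifferentiableOn ℂ φ (ball 0 ρ)) (g : ℂ → ℝ)
    (hg : ContDiffOn ℝ 1 g (ball 0 ρ \ {0}))
    (hdz : ∀ z ∈ ball (0:ℂ) ρ \ {0},
      2 * ((1/2 : ℂ) * (((fderiv ℝ g z 1 : ℝ) : ℂ)
        - Complex.I * ((fderiv ℝ g z Complex.I : ℝ) : ℂ))) = 1 / z + φ z) :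
    ∃ ψ : ℂ → ℂ, DifferentiableOn ℂ ψ (ball 0 ρ) ∧
      (∀ z ∈ ball (0:ℂ) ρ \ {0}, g z = Real.log ‖z‖ + (ψ z).re) ∧
      Filter.Tendsto g (nhdsWithin 0 (ball 0 ρ \ {0})) Filter.atBot := by
  -- power series of φ at 0
  set p : FormalMultilinearSeries ℂ ℂ ℂ := cauchyPowerSeries φ 0 (ρ/2).toNNReal with hp_def
  set a : ℕ → ℂ := fun n => p.coeff n with ha_def
  have hhalf : (0:NNReal) < (ρ/2).toNNReal := by
    rw [Real.toNNReal_pos]; linarith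
  have hp_half : HasFPowerSeriesOnBall φ p 0 (ρ/2).toNNReal := by
    apply DifferentiableOn.hasFPowerSeriesOnBall ?_ hhalf
    apply hφ.mono
    intro w hw
    rw [mem_closedBall_zero_iff] at hw
    rw [mem_ball_zero_iff]
    calc ‖w‖ ≤ ((ρ/2).toNNReal : ℝ) := hw
      _ = ρ/2 := Real.coe_toNNReal _ (by linarith)
      _ < ρ := by linarith
  have hball : ∀ r : ℝ, 0 < r → r < ρ → HasFPowerSeriesOnBall φ p 0 r.toNNReal := by
    intro r hr0 hrρ
    have hr' : (0:NNReal) < r.toNNReal := by rw [Real.toNNReal_pos]; linarith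
    have h1 : DifferentiableOn ℂ φ (closedBall 0 (r.toNNReal : ℝ)) := by
      apply hφ.mono
      intro w hw
      rw [mem_closedBall_zero_iff] at hw
      rw [mem_ball_zero_iff]
      calc ‖w‖ ≤ (r.toNNReal : ℝ) := hw
        _ = r := Real.coe_toNNReal _ hr0.le
        _ < ρ := hrρ
    have h2 := h1.hasFPowerSeriesOnBall hr'
    rwa [h2.hasFPowerSeriesAt.eq_formalMultilinearSeries hp_half.hasFPowerSeriesAt] at h2
  -- sum of the series
  have hsum : ∀ z ∈ ball (0:ℂ) ρ, HasSum (fun n => a n * z ^ n) (φ z) := by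
    intro z hz
    rw [mem_ball_zero_iff] at hz
    set r : ℝ := (‖z‖ + ρ) / 2 with hr_def
    have hnn := norm_nonneg z
    have hr0 : 0 < r := by rw [hr_def]; linarith
    have hzr : ‖z‖ < r := by rw [hr_def]; linarith
    have hrρ : r < ρ := by rw [hr_def]; linarith
    have hmem : z ∈ Metric.eball (0:ℂ) r.toNNReal := by
      rw [Metric.emetric_ball_nnreal, mem_ball_zero_iff, Real.coe_toNNReal _ hr0.le]
      exact hzr
    have H := (hball r hr0 hrρ).hasSum hmem
    rw [zero_add] at H
    have : (fun n => p n fun _ => z) = fun n => a n * z ^ n := by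
      funext n
      rw [FormalMultilinearSeries.apply_eq_pow_smul_coeff, smul_eq_mul]
      ring
    rwa [this] at H
  -- summability of coefficients times powers
  have hsummable : ∀ r : ℝ, 0 ≤ r → r < ρ → Summable (fun n => ‖a n‖ * r ^ n) := by
    intro r hr0 hrρ
    set r' : ℝ := (r + ρ) / 2 with hr'_def
    have hr'0 : 0 < r' := by rw [hr'_def]; linarith
    have hrr' : r < r' := by rw [hr'_def]; linarith
    have hr'ρ : r' < ρ := by rw [hr'_def]; linarith
    have hrad : (r.toNNReal : ℝ≥0∞) < p.radius := by
      calc (r.toNNReal : ℝ≥0∞) < (r'.toNNReal : ℝ≥0∞) := by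
            rw [ENNReal.coe_lt_coe]
            exact_mod_cast (Real.toNNReal_lt_toNNReal_iff hr'0).2 hrr'
        _ ≤ p.radius := (hball r' hr'0 hr'ρ).r_le
    have hS := p.summable_norm_mul_pow hrad
    apply Summable.of_nonneg_of_le (fun n => by positivity) (fun n => ?_) hS
    have h1 : ‖a n‖ ≤ ‖p n‖ := by
      have h0 := (p n).le_opNorm (1 : Fin n → ℂ)
      simp only [Pi.one_apply, norm_one, Finset.prod_const_one, mul_one] at h0
      exact h0
    have h2 : (r.toNNReal : ℝ) = r := Real.coe_toNNReal _ hr0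
    rw [h2]
    exact mul_le_mul_of_nonneg_right h1 (by positivity)
  -- primitive of φ
  set Φ : ℂ → ℂ := fun z => ∑' n, (a n / (n+1)) * z ^ (n+1) with hΦ_def
  have hΦderiv : ∀ z ∈ ball (0:ℂ) ρ, HasDerivAt Φ (φ z) z := by
    intro z hz
    rw [mem_ball_zero_iff] at hz
    set r : ℝ := (‖z‖ + ρ) / 2 with hr_def
    have hnn := norm_nonneg z
    have hr0 : 0 < r := by rw [hr_def]; linarith
    have hzr : ‖z‖ < r := by rw [hr_def]; linarith
    have hrρ : r < ρ := by rw [hr_def]; linarith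
    have H := hasDerivAt_tsum_of_isPreconnected
      (u := fun n => ‖a n‖ * r ^ n)
      (g := fun n w => (a n / (n+1)) * w ^ (n+1))
      (g' := fun n w => a n * w ^ n)
      (hsummable r hr0.le hrρ) isOpen_ball (convex_ball (0:ℂ) r).isPreconnected
      (fun n y _ => ?_) (fun n y hy => ?_)
      (mem_ball_self hr0) ?_ (mem_ball_zero_iff.2 hzr)
    · have : ∑' n, a n * z ^ n = φ z := (hsum z (mem_ball_zero_iff.2 hz)).tsum_eq
      rwa [this] at H
    · -- term derivative
      have h1 := hasDerivAt_pow (n+1) y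
      have h2 := h1.const_mul (a n / (n+1))
      convert h2 using 1
      · rfl
      have hne : ((n:ℂ) + 1) ≠ 0 := by
        intro hcon
        exact_mod_cast hcon
      rw [Nat.add_sub_cancel]; push_cast
      field_simp
    · -- bound
      rw [mem_ball_zero_iff] at hy
      rw [norm_mul, norm_pow]
      exact mul_le_mul_of_nonneg_left (pow_le_pow_left₀ (norm_nonneg y) hy.le n)
        (norm_nonneg _)
    · -- summable at 0
      apply Summable.congr summable_zero
      intro n
      simp
  -- the punctured ball
  set s : Set ℂ := ball (0:ℂ) ρ \ {0} with hs_def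
  have hs_open : IsOpen s := isOpen_ball.sdiff isClosed_singleton
  -- fderiv of g
  have hfd : ∀ z ∈ s, ∀ h : ℂ, fderiv ℝ g z h = ((1/z + φ z) * h).re := by
    intro z hz h
    have hX : ((fderiv ℝ g z 1 : ℝ) : ℂ) - Complex.I * ((fderiv ℝ g z Complex.I : ℝ) : ℂ)
        = 1 / z + φ z := by linear_combination hdz z hz
    have ha' : fderiv ℝ g z 1 = (1/z + φ z).re := by
      have h5 := congrArg Complex.re hX
      simp only [Complex.sub_re, Complex.ofReal_re, Complex.mul_re, Complex.I_re,
        Complex.I_im, Complex.ofReal_im, zero_mul, one_mul, mul_zero, zero_sub,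
        sub_zero, add_zero, sub_neg_eq_add, zero_add] at h5
      linarith
    have hb' : fderiv ℝ g z Complex.I = -((1/z + φ z).im) := by
      have h5 := congrArg Complex.im hX
      simp only [Complex.sub_im, Complex.ofReal_im, Complex.mul_im, Complex.I_re,
        Complex.I_im, Complex.ofReal_re, zero_mul, one_mul, mul_zero, zero_sub,
        sub_zero, add_zero, zero_add] at h5
      linarith
    have hdc : h = h.re • (1:ℂ) + h.im • Complex.I := by
      simp [Complex.ext_iff]
    calc fderiv ℝ g z h = fderiv ℝ g z (h.re • (1:ℂ) + h.im • Complex.I) := by rw [← hdc]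
      _ = h.re • fderiv ℝ g z 1 + h.im • fderiv ℝ g z Complex.I := by
          rw [map_add, map_smul, map_smul]
      _ = h.re * (1/z + φ z).re - h.im * (1/z + φ z).im := by
          rw [ha', hb']; simp [smul_eq_mul]; ring
      _ = ((1/z + φ z) * h).re := by rw [Complex.mul_re]; ring
  have hgdiff : ∀ z ∈ s, DifferentiableAt ℝ g z := fun z hz =>
    ((hg.differentiableOn one_ne_zero) z hz).differentiableAt (hs_open.mem_nhds hz)
  -- F has zero derivative
  set F : ℂ → ℝ := fun z => g z - Real.log ‖z‖ - (Φ z).re with hF_def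
  have hF0 : ∀ z ∈ s, HasFDerivAt F (0 : ℂ →L[ℝ] ℝ) z := by
    intro z hz
    have hzball : z ∈ ball (0:ℂ) ρ := hz.1
    have hz0 : z ≠ 0 := hz.2
    have hnsq : Complex.normSq z ≠ 0 := (Complex.normSq_pos.2 hz0).ne'
    -- derivative of g
    have Hg : HasFDerivAt g (fderiv ℝ g z) z := (hgdiff z hz).hasFDerivAt
    -- derivative of log abs
    have hre : HasFDerivAt (fun w : ℂ => w.re) (Complex.reCLM : ℂ →L[ℝ] ℝ) z :=
      Complex.reCLM.hasFDerivAt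
    have him : HasFDerivAt (fun w : ℂ => w.im) (Complex.imCLM : ℂ →L[ℝ] ℝ) z :=
      Complex.imCLM.hasFDerivAt
    have hnormSq : HasFDerivAt (fun w : ℂ => Complex.normSq w)
        ((z.re • (Complex.reCLM : ℂ →L[ℝ] ℝ) + z.re • (Complex.reCLM : ℂ →L[ℝ] ℝ))
          + (z.im • (Complex.imCLM : ℂ →L[ℝ] ℝ) + z.im • (Complex.imCLM : ℂ →L[ℝ] ℝ))) z := by
      have h1 := hre.mul hre
      have h2 := him.mul him
      have h3 := h1.add h2
      have : (fun w : ℂ => Complex.normSq w) = fun w : ℂ => w.re * w.re + w.im * w.im := by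
        funext w; exact Complex.normSq_apply w
      rw [this]
      exact h3
    have hlog : HasFDerivAt (fun w : ℂ => Real.log (Complex.normSq w))
        ((Complex.normSq z)⁻¹ •
          ((z.re • (Complex.reCLM : ℂ →L[ℝ] ℝ) + z.re • (Complex.reCLM : ℂ →L[ℝ] ℝ))
          + (z.im • (Complex.imCLM : ℂ →L[ℝ] ℝ) + z.im • (Complex.imCLM : ℂ →L[ℝ] ℝ)))) z :=
      (Real.hasDerivAt_log hnsq).comp_hasFDerivAt z hnormSq
    have hlogabs : HasFDerivAt (fun w : ℂ => Real.log ‖w‖)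
        ((2:ℝ)⁻¹ • ((Complex.normSq z)⁻¹ •
          ((z.re • (Complex.reCLM : ℂ →L[ℝ] ℝ) + z.re • (Complex.reCLM : ℂ →L[ℝ] ℝ))
          + (z.im • (Complex.imCLM : ℂ →L[ℝ] ℝ) + z.im • (Complex.imCLM : ℂ →L[ℝ] ℝ))))) z := by
      have heq : (fun w : ℂ => Real.log ‖w‖) =ᶠ[nhds z]
          fun w : ℂ => (2:ℝ)⁻¹ * Real.log (Complex.normSq w) := by
        filter_upwards with w
        rw [Complex.norm_def, Real.log_sqrt (Complex.normSq_nonneg w), div_eq_inv_mul]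
      have h4 := hlog.const_mul ((2:ℝ)⁻¹)
      exact HasFDerivAt.congr_of_eventuallyEq h4 heq
    -- derivative of Re Φ
    have hΦR := ((hΦderiv z hzball).hasFDerivAt).restrictScalars ℝ
    have hReΦ : HasFDerivAt (fun w : ℂ => (Φ w).re)
        ((Complex.reCLM : ℂ →L[ℝ] ℝ).comp
          ((ContinuousLinearMap.smulRight (1 : ℂ →L[ℂ] ℂ) (φ z)).restrictScalars ℝ)) z :=
      Complex.reCLM.hasFDerivAt.comp z hΦR
    have Htot := (Hg.sub hlogabs).sub hReΦ
    have hzero : fderiv ℝ g z - (2:ℝ)⁻¹ • ((Complex.normSq z)⁻¹ •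
          ((z.re • (Complex.reCLM : ℂ →L[ℝ] ℝ) + z.re • (Complex.reCLM : ℂ →L[ℝ] ℝ))
          + (z.im • (Complex.imCLM : ℂ →L[ℝ] ℝ) + z.im • (Complex.imCLM : ℂ →L[ℝ] ℝ))))
        - (Complex.reCLM : ℂ →L[ℝ] ℝ).comp
          ((ContinuousLinearMap.smulRight (1 : ℂ →L[ℂ] ℂ) (φ z)).restrictScalars ℝ)
        = 0 := by
      ext h
      simp only [ContinuousLinearMap.sub_apply, ContinuousLinearMap.smul_apply,
        ContinuousLinearMap.add_apply, ContinuousLinearMap.coe_comp', Function.comp_apply,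
        ContinuousLinearMap.coe_restrictScalars', ContinuousLinearMap.smulRight_apply,
        ContinuousLinearMap.one_apply, Complex.reCLM_apply, Complex.imCLM_apply,
        ContinuousLinearMap.zero_apply, smul_eq_mul]
      rw [hfd z hz h]
      have hdiv : ((1/z) * h).re = (h.re * z.re + h.im * z.im) / Complex.normSq z := by
        have : (1/z) * h = h / z := by ring
        rw [this, Complex.div_re]
        ring
      rw [add_mul, Complex.add_re, hdiv, mul_comm h (φ z)]
      field_simp
      ring
    rw [hzero] at Htot
    exact Htot
  -- constancy
  have hz₀mem : ((ρ/2 : ℝ) : ℂ) ∈ s := by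
    constructor
    · rw [mem_ball_zero_iff]
      have : ‖((ρ/2 : ℝ) : ℂ)‖ = ρ/2 := by
        simp [Complex.norm_real, Real.norm_eq_abs, abs_of_pos hρ]
      rw [this]
      linarith
    · simp only [mem_singleton_iff]
      intro h
      rw [Complex.ofReal_eq_zero] at h
      linarith
  set c : ℝ := F ((ρ/2 : ℝ) : ℂ) with hc_def
  have hFc : ∀ z ∈ s, F z = c := fun z hz =>
    aux_const_of_fderiv_zero hs_open (aux_preconnected ρ hρ) hF0 hz hz₀mem
  -- the holomorphic ψ
  refine ⟨fun z => Φ z + (c : ℂ), ?_, ?_, ?_⟩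
  · intro z hz
    exact ((hΦderiv z hz).differentiableAt.add_const _).differentiableWithinAt
  · intro z hz
    have := hFc z hz
    simp only [hF_def] at this
    simp only [Complex.add_re, Complex.ofReal_re]
    linarith
  · -- tendsto atBot
    have heq : ∀ z ∈ s, g z = Real.log ‖z‖ + ((Φ z).re + c) := by
      intro z hz
      have := hFc z hz
      simp only [hF_def] at this
      linarith
    have h1 : Filter.Tendsto (fun z : ℂ => Real.log ‖z‖)
        (nhdsWithin 0 s) Filter.atBot := by
      apply Real.tendsto_log_nhdsGT_zero.comp
      rw [tendsto_nhdsWithin_iff]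
      constructor
      · have : Filter.Tendsto (fun z : ℂ => ‖z‖) (nhds 0) (nhds 0) := by
          simpa using continuous_norm.tendsto (0:ℂ)
        exact this.mono_left nhdsWithin_le_nhds
      · filter_upwards [self_mem_nhdsWithin] with z hz
        exact mem_Ioi.2 (norm_pos_iff.2 hz.2)
    have h2 : Filter.Tendsto (fun z : ℂ => (Φ z).re + c)
        (nhdsWithin 0 s) (nhds ((Φ 0).re + c)) := by
      have hΦcont : ContinuousAt Φ 0 :=
        (hΦderiv 0 (mem_ball_self hρ)).differentiableAt.continuousAt
      exact ((Complex.continuous_re.continuousAt.comp hΦcont).tendsto.add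
        tendsto_const_nhds).mono_left nhdsWithin_le_nhds
    have h3 := h1.atBot_add h2
    apply h3.congr'
    filter_upwards [self_mem_nhdsWithin] with z hz
    exact (heq z hz).symm
end
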